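/- arXiv:1204.4747 — 11 statements merged into one kernel-verified Lean document; each statement's English description precedes it below -/
import Mathlib

section
/- Let p be a prime, K a group, H = K ≀ ℤ/p, a ∈ K, τ a nonzero element of ℤ/p, and x = ((a,1,…,1),τ) ∈ H. Then x commutes with diag(y) for every y ∈ Z_K(a), the centralizer of x in H is Z_H(x) = {diag(y)·x^k : y ∈ Z_K(a), 0 ≤ k < p}, and there is a short exact sequence 1 → Z_K(a) → Z_H(x) → ℤ/p → 1, where the first map is y ↦ diag(y) (injective with image Z_H(x) ∩ K^p) and the second map is the restriction of π to Z_H(x) (surjective with kernel {diag(y) : y ∈ Z_K(a)}). -/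
/-- The cyclic shift action of `ℤ/p` on `K^p`: the generator `1 ∈ ℤ/p` sends
`(x_1, …, x_p)` to `(x_p, x_1, …, x_{p-1})`. -/
def cycShift (p : ℕ) (K : Type*) [Group K] :
    Multiplicative (ZMod p) →* MulAut (ZMod p → K) where
  toFun τ :=
    { toFun := fun x i => x (i - Multiplicative.toAdd τ)
      invFun := fun x i => x (i + Multiplicative.toAdd τ)
      left_inv := fun x => funext fun i => by simp
      right_inv := fun x => funext fun i => by simp
      map_mul' := fun x y => rfl }
  map_one' := by
    ext x i
    simp
  map_mul' := fun σ τ => by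
    ext x i
    simp [sub_sub]

/-- The wreath product `K ≀ ℤ/p`. -/
abbrev WreathP (p : ℕ) (K : Type*) [Group K] :=
  SemidirectProduct (ZMod p → K) (Multiplicative (ZMod p)) (cycShift p K)

lemma cycShift_apply {p : ℕ} {K : Type*} [Group K] (σ : Multiplicative (ZMod p))
    (g : ZMod p → K) (i : ZMod p) :
    cycShift p K σ g i = g (i - Multiplicative.toAdd σ) := rfl

lemma wreath_mul_def {p : ℕ} {K : Type*} [Group K] (f g : ZMod p → K)
    (σ ρ : Multiplicative (ZMod p)) :
    (⟨f, σ⟩ * ⟨g, ρ⟩ : WreathP p K) = ⟨f * cycShift p K σ g, σ * ρ⟩ := rfl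

lemma commute_diag {p : ℕ} {K : Type*} [Group K] (a : K) (τ : Multiplicative (ZMod p))
    {y : K} (hy : a * y = y * a) :
    Commute (⟨Pi.mulSingle (0 : ZMod p) a, τ⟩ : WreathP p K)
      (SemidirectProduct.inl fun _ => y) := by
  have hd : (SemidirectProduct.inl fun _ => y : WreathP p K) = ⟨fun _ => y, 1⟩ := rfl
  rw [Commute, SemiconjBy, hd, wreath_mul_def, wreath_mul_def]
  ext i
  · by_cases h : i = 0 <;>
      simp [Pi.mul_apply, cycShift_apply, h, hy, Pi.mulSingle_apply]
  · simp [mul_comm]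

lemma centralizer_const {p : ℕ} (hp : p.Prime) {K : Type*} [Group K] (a : K)
    {t : ZMod p} (ht : t ≠ 0) (g : ZMod p → K)
    (hcond : ∀ i, (Pi.mulSingle (0:ZMod p) a : ZMod p → K) i * g (i - t)
      = g i * (Pi.mulSingle (0:ZMod p) a : ZMod p → K) i) :
    (∀ i, g i = g 0) ∧ a * g 0 = g 0 * a := by
  haveI := Fact.mk hp
  haveI : NeZero p := ⟨hp.ne_zero⟩
  have hstep : ∀ i : ZMod p, i ≠ 0 → g (i - t) = g i := by
    intro i hi
    have h := hcond i
    simpa [Pi.mulSingle_apply, hi] using h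
  have hmul : ∀ m : ℕ, m < p → g ((m : ZMod p) * t) = g 0 := by
    intro m
    induction m with
    | zero => intro _; simp
    | succ n ih =>
      intro hlt
      have hne : ((n + 1 : ℕ) : ZMod p) ≠ 0 := by
        rw [Ne, ZMod.natCast_eq_zero_iff]
        exact fun hd => absurd (Nat.le_of_dvd (Nat.succ_pos n) hd) (not_le.mpr hlt)
      have h := hstep _ (mul_ne_zero hne ht)
      rw [show ((n + 1 : ℕ) : ZMod p) * t - t = (n : ZMod p) * t by push_cast; ring] at h
      rw [← h]
      exact ih (Nat.lt_of_succ_lt hlt)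
  have hall : ∀ i, g i = g 0 := by
    intro i
    have hlt := ZMod.val_lt (i * t⁻¹)
    have he : ((ZMod.val (i * t⁻¹) : ℕ) : ZMod p) * t = i := by
      rw [ZMod.natCast_val, ZMod.cast_id, mul_assoc, inv_mul_cancel₀ ht, mul_one]
    rw [← he]
    exact hmul _ hlt
  refine ⟨hall, ?_⟩
  have h0 := hcond 0
  rw [hall (0 - t)] at h0
  simpa using h0


/-- Let `p` be a prime, `K` a group, `H = K ≀ ℤ/p`, `a ∈ K`, `τ` a nonzero
element of `ℤ/p`, and `x = ((a,1,…,1),τ) ∈ H`.  Then `x` commutes with `diag(y)` for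
every `y ∈ Z_K(a)`, the centralizer of `x` in `H` is
`Z_H(x) = {diag(y)·x^k : y ∈ Z_K(a), 0 ≤ k < p}`, and there is a short exact sequence
`1 → Z_K(a) → Z_H(x) → ℤ/p → 1` where the first map is `y ↦ diag(y)` (injective, with
image `Z_H(x) ∩ K^p`) and the second is the restriction of `π` to `Z_H(x)` (surjective,
with kernel `{diag(y) : y ∈ Z_K(a)}`). -/
theorem centralizer_structure_of_generator
    (p : ℕ) (hp : p.Prime) (K : Type*) [Group K] (a : K)
    (τ : Multiplicative (ZMod p)) (hτ : τ ≠ 1) :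
    -- `x` commutes with `diag(y)` for every `y ∈ Z_K(a)`
    (∀ y ∈ Subgroup.centralizer ({a} : Set K),
      Commute (⟨Pi.mulSingle (0 : ZMod p) a, τ⟩ : WreathP p K)
        (SemidirectProduct.inl fun _ => y)) ∧
    -- `Z_H(x) = {diag(y)·x^k : y ∈ Z_K(a), 0 ≤ k < p}`
    (∀ h : WreathP p K,
      h ∈ Subgroup.centralizer {(⟨Pi.mulSingle (0 : ZMod p) a, τ⟩ : WreathP p K)} ↔
        ∃ y ∈ Subgroup.centralizer ({a} : Set K), ∃ k : ℕ, k < p ∧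
          h = SemidirectProduct.inl (fun _ => y) *
            (⟨Pi.mulSingle (0 : ZMod p) a, τ⟩ : WreathP p K) ^ k) ∧
    -- `y ↦ diag(y)` is injective
    (Function.Injective fun y : K => (SemidirectProduct.inl fun _ => y : WreathP p K)) ∧
    -- its image, restricted to `Z_K(a)`, is exactly `Z_H(x) ∩ K^p`,
    -- which is also the kernel of `π` restricted to `Z_H(x)`
    (∀ h : WreathP p K,
      (h ∈ Subgroup.centralizer {(⟨Pi.mulSingle (0 : ZMod p) a, τ⟩ : WreathP p K)} ∧
          h.right = 1) ↔
        ∃ y ∈ Subgroup.centralizer ({a} : Set K),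
          h = SemidirectProduct.inl fun _ => y) ∧
    -- `π` restricted to `Z_H(x)` is surjective onto `ℤ/p`
    (∀ σ : Multiplicative (ZMod p),
      ∃ h ∈ Subgroup.centralizer {(⟨Pi.mulSingle (0 : ZMod p) a, τ⟩ : WreathP p K)},
        SemidirectProduct.rightHom h = σ) := by
  haveI := Fact.mk hp
  haveI : NeZero p := ⟨hp.ne_zero⟩
  set x : WreathP p K := ⟨Pi.mulSingle (0 : ZMod p) a, τ⟩ with hxdef
  set t : ZMod p := Multiplicative.toAdd τ with htdef
  have ht : t ≠ 0 := by
    intro h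
    apply hτ
    have := congrArg Multiplicative.ofAdd h
    simpa [htdef] using this
  have memZKa : ∀ y ∈ Subgroup.centralizer ({a} : Set K), a * y = y * a := by
    intro y hy
    exact Subgroup.mem_centralizer_iff.mp hy a (Set.mem_singleton a)
  have key1 : ∀ y ∈ Subgroup.centralizer ({a} : Set K),
      Commute x (SemidirectProduct.inl fun _ => y) := by
    intro y hy
    exact commute_diag a τ (memZKa y hy)
  have xmemC : x ∈ Subgroup.centralizer {x} :=
    Subgroup.mem_centralizer_singleton_iff.mpr rfl
  have xright : SemidirectProduct.rightHom x = τ := rfl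
  have xpow_right : ∀ k : ℕ, (x ^ k).right = τ ^ k := by
    intro k
    show SemidirectProduct.rightHom (x ^ k) = τ ^ k
    rw [map_pow, xright]
  have keypow : ∀ σ : Multiplicative (ZMod p), ∃ k : ℕ, k < p ∧ τ ^ k = σ := by
    intro σ
    refine ⟨(Multiplicative.toAdd σ * t⁻¹).val, ZMod.val_lt _, ?_⟩
    apply Multiplicative.toAdd.injective
    rw [toAdd_pow, nsmul_eq_mul, ZMod.natCast_val, ZMod.cast_id, mul_assoc,
      inv_mul_cancel₀ ht, mul_one]
  have bwd : ∀ (y : K), y ∈ Subgroup.centralizer ({a} : Set K) → ∀ k : ℕ,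
      SemidirectProduct.inl (fun _ => y) * x ^ k ∈ Subgroup.centralizer {x} := by
    intro y hy k
    have hc : Commute x (SemidirectProduct.inl (fun _ => y) * x ^ k) :=
      (key1 y hy).mul_right ((Commute.refl x).pow_right k)
    exact Subgroup.mem_centralizer_singleton_iff.mpr hc.symm.eq
  have main : ∀ h : WreathP p K, h ∈ Subgroup.centralizer {x} →
      ∃ y ∈ Subgroup.centralizer ({a} : Set K), ∃ k : ℕ, k < p ∧
        h = SemidirectProduct.inl (fun _ => y) * x ^ k := by
    intro h hh
    obtain ⟨k, hk, hτk'⟩ := keypow h.right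
    set w := h * (x ^ k)⁻¹ with hwdef
    have hw : w ∈ Subgroup.centralizer {x} :=
      mul_mem hh (inv_mem (pow_mem xmemC k))
    have hwr : w.right = 1 := by
      rw [hwdef]
      show (h * (x ^ k)⁻¹).right = 1
      rw [SemidirectProduct.mul_right]
      have hin : ((x ^ k)⁻¹).right = ((x ^ k).right)⁻¹ := rfl
      rw [hin, xpow_right, hτk', mul_inv_cancel]
    have hwc : x * w = w * x := (Subgroup.mem_centralizer_singleton_iff.mp hw).symm
    have hw1 : w = (⟨w.left, 1⟩ : WreathP p K) := by
      ext
      · rfl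
      · exact hwr
    rw [hw1, hxdef, wreath_mul_def, wreath_mul_def] at hwc
    have hcond : ∀ i, (Pi.mulSingle (0:ZMod p) a : ZMod p → K) i * w.left (i - t)
        = w.left i * (Pi.mulSingle (0:ZMod p) a : ZMod p → K) i := by
      intro i
      have h2 := congrFun (congrArg SemidirectProduct.left hwc) i
      simpa [cycShift_apply, Pi.mul_apply] using h2
    obtain ⟨hallconst, hcommA⟩ := centralizer_const hp a ht w.left hcond
    have hymem : w.left 0 ∈ Subgroup.centralizer ({a} : Set K) := by
      apply Subgroup.mem_centralizer_iff.mpr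
      intro b hb
      rw [Set.mem_singleton_iff] at hb
      subst hb
      exact hcommA
    refine ⟨w.left 0, hymem, k, hk, ?_⟩
    have hwinl : w = SemidirectProduct.inl (fun _ => w.left 0) := by
      ext i
      · exact hallconst i
      · exact hwr
    rw [← hwinl, hwdef, inv_mul_cancel_right]
  refine ⟨key1, ?_, ?_, ?_, ?_⟩
  · intro h
    constructor
    · exact main h
    · rintro ⟨y, hy, k, _, rfl⟩
      exact bwd y hy k
  · intro y₁ y₂ hyy
    have := congrFun (congrArg SemidirectProduct.left hyy) 0
    simpa using this
  · intro h
    constructor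
    · rintro ⟨hh, hr⟩
      obtain ⟨y, hy, k, hk, rfl⟩ := main h hh
      have hτk : τ ^ k = 1 := by
        rw [SemidirectProduct.mul_right, SemidirectProduct.right_inl, one_mul,
          xpow_right] at hr
        exact hr
      have hop : orderOf τ = p := by
        have hd : orderOf τ ∣ p := by
          have : orderOf τ ∣ Fintype.card (Multiplicative (ZMod p)) := orderOf_dvd_card
          simpa [ZMod.card] using this
        rcases (hp.eq_one_or_self_of_dvd _ hd) with h1 | h1
        · exact absurd (orderOf_eq_one_iff.mp h1) hτ
        · exact h1
      have hk0 : k = 0 := by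
        have : p ∣ k := hop ▸ orderOf_dvd_of_pow_eq_one hτk
        exact Nat.eq_zero_of_dvd_of_lt this hk
      subst hk0
      exact ⟨y, hy, by rw [pow_zero, mul_one]⟩
    · rintro ⟨y, hy, rfl⟩
      refine ⟨Subgroup.mem_centralizer_singleton_iff.mpr (key1 y hy).symm.eq, ?_⟩
      exact SemidirectProduct.right_inl _
  · intro σ
    obtain ⟨k, _, hτk⟩ := keypow σ
    refine ⟨x ^ k, pow_mem xmemC k, ?_⟩
    rw [map_pow, xright, hτk]
end

section
/- Let p be a prime, K a group, H = K ≀ ℤ/p, a ∈ K, τ a nonzero element of ℤ/p, and x = ((a,1,…,1),τ) ∈ H. Then x^p = diag(a), the cyclic subgroup D = ⟨diag(a)⟩ is contained in the center of the centralizer Z_H(x), and the quotient Z_H(x)/D is isomorphic to the direct product (Z_K(a)/⟨a⟩) × ℤ/p. In particular Z_H(x) is a central extension of (Z_K(a)/⟨a⟩) × ℤ/p by the cyclic group generated by a. -/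
/-- `a` as an element of its own centralizer. -/
def aZ (K : Type*) [Group K] (a : K) : Subgroup.centralizer ({a} : Set K) :=
  ⟨a, Subgroup.mem_centralizer_iff.mpr (by rintro g rfl; rfl)⟩

/-- `a` is central in `Z_K(a)`, so the cyclic subgroup `⟨a⟩` it generates is normal
in `Z_K(a)`. -/
instance aZ_zpowers_normal (K : Type*) [Group K] (a : K) :
    (Subgroup.zpowers (aZ K a)).Normal := by
  constructor
  intro n hn g
  rw [Subgroup.mem_zpowers_iff] at hn ⊢
  obtain ⟨k, rfl⟩ := hn
  refine ⟨k, ?_⟩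
  have hc : Commute (aZ K a) g := by
    have := Subgroup.mem_centralizer_iff.mp g.2 a rfl
    exact Subtype.ext this
  rw [eq_comm, mul_inv_eq_iff_eq_mul]
  exact ((hc.zpow_left k).symm).eq

namespace CCE

variable (p : ℕ) (K : Type*) [Group K] (a : K) (τ : Multiplicative (ZMod p))

/-- The distinguished element `x = ((a,1,…,1), τ)`. -/
abbrev xx : WreathP p K := ⟨Pi.mulSingle (0 : ZMod p) a, τ⟩

/-- Left part of `x^m`, for `m ≤ p`. -/
def GG (m : ℕ) : ZMod p → K :=
  fun i => if (i * (Multiplicative.toAdd τ)⁻¹).val < m then a else 1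

theorem cycShift_apply (σ : Multiplicative (ZMod p)) (g : ZMod p → K) (i : ZMod p) :
    cycShift p K σ g i = g (i - Multiplicative.toAdd σ) := rfl

theorem val_neg_one' (hp : p ≠ 0) : (-1 : ZMod p).val = p - 1 := by
  rcases p with _ | q
  · exact absurd rfl hp
  · simpa using ZMod.val_neg_one q

variable {p τ}

theorem t_ne (hτ : τ ≠ 1) : Multiplicative.toAdd τ ≠ 0 := by
  simpa [toAdd_eq_zero] using hτ

theorem tau_pow (hp : p.Prime) (σ : Multiplicative (ZMod p)) (m : ℕ)
    (hm : (m : ZMod p) * 1 = Multiplicative.toAdd σ * 1) : True := trivial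

variable (hp : p.Prime) (hτ : τ ≠ 1)
include hp hτ

set_option maxHeartbeats 800000 in
theorem xx_pow {m : ℕ} (hm : m ≤ p) :
    (xx p K a τ) ^ m = ⟨GG p K a τ m, τ ^ m⟩ := by
  haveI : Fact p.Prime := ⟨hp⟩
  have ht : Multiplicative.toAdd τ ≠ 0 := t_ne hτ
  induction m with
  | zero =>
    ext i
    · simp [GG]
    · simp
  | succ m ih =>
    rw [pow_succ', ih (Nat.le_of_succ_le hm)]
    ext i
    · simp only [SemidirectProduct.mul_left, Pi.mul_apply]
      rw [cycShift_apply]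
      by_cases hi : i = (0 : ZMod p)
      · subst hi
        have hneg : ((0 - Multiplicative.toAdd τ) * (Multiplicative.toAdd τ)⁻¹) = (-1 : ZMod p) := by
          rw [zero_sub, neg_mul, mul_inv_cancel₀ ht]
        have h2 : ¬ (((0 - Multiplicative.toAdd τ) * (Multiplicative.toAdd τ)⁻¹).val < m) := by
          rw [hneg, val_neg_one' p hp.pos.ne']
          omega
        have h3 : ((0 : ZMod p) * (Multiplicative.toAdd τ)⁻¹).val < m + 1 := by
          simp [ZMod.val_zero]
        show (Pi.mulSingle (0 : ZMod p) a : ZMod p → K) 0 * GG p K a τ m (0 - Multiplicative.toAdd τ)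
            = GG p K a τ (m + 1) 0
        rw [Pi.mulSingle_eq_same]
        simp only [GG, if_neg h2, if_pos h3, mul_one]
      · have hfi : (Pi.mulSingle (0 : ZMod p) a : ZMod p → K) i = 1 := Pi.mulSingle_eq_of_ne hi _
        have hr : (i * (Multiplicative.toAdd τ)⁻¹) ≠ 0 := by
          intro h
          exact hi (by
            have := congrArg (· * Multiplicative.toAdd τ) h
            simpa [mul_assoc, inv_mul_cancel₀ ht] using this)
        have hr1 : 1 ≤ (i * (Multiplicative.toAdd τ)⁻¹).val := Nat.one_le_iff_ne_zero.mpr (by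
          simpa [ZMod.val_eq_zero] using hr)
        have hsub : ((i - Multiplicative.toAdd τ) * (Multiplicative.toAdd τ)⁻¹)
            = i * (Multiplicative.toAdd τ)⁻¹ - 1 := by
          rw [sub_mul, mul_inv_cancel₀ ht]
        have hcast : ((i * (Multiplicative.toAdd τ)⁻¹).val - 1 : ℕ)
            = ((i * (Multiplicative.toAdd τ)⁻¹) - 1 : ZMod p).val := by
          have h1 : (((i * (Multiplicative.toAdd τ)⁻¹).val - 1 : ℕ) : ZMod p)
              = i * (Multiplicative.toAdd τ)⁻¹ - 1 := by
            rw [Nat.cast_sub hr1, ZMod.natCast_zmod_val, Nat.cast_one]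
          rw [← h1, ZMod.val_cast_of_lt
            (by have := ZMod.val_lt (i * (Multiplicative.toAdd τ)⁻¹); omega)]
        have hvv : ((i - Multiplicative.toAdd τ) * (Multiplicative.toAdd τ)⁻¹).val
            = (i * (Multiplicative.toAdd τ)⁻¹).val - 1 := by rw [hsub, ← hcast]
        show (Pi.mulSingle (0 : ZMod p) a : ZMod p → K) i * GG p K a τ m (i - Multiplicative.toAdd τ)
            = GG p K a τ (m + 1) i
        rw [hfi, one_mul]
        simp only [GG, hvv]
        have hiff : ((i * (Multiplicative.toAdd τ)⁻¹).val - 1 < m)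
            ↔ ((i * (Multiplicative.toAdd τ)⁻¹).val < m + 1) := by omega
        simp [hiff]
    · show τ * τ ^ m = τ ^ (m + 1)
      rw [pow_succ']

omit hp hτ in
theorem tau_pow_self : τ ^ p = 1 := by
  have : Multiplicative.toAdd (τ ^ p) = Multiplicative.toAdd (1 : Multiplicative (ZMod p)) := by
    rw [toAdd_pow, toAdd_one, nsmul_eq_mul, ZMod.natCast_self, zero_mul]
  exact Multiplicative.toAdd.injective this

theorem xx_pow_p : (xx p K a τ) ^ p = SemidirectProduct.inl (fun _ => a) := by
  haveI : Fact p.Prime := ⟨hp⟩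
  rw [xx_pow K a hp hτ le_rfl]
  ext i
  · show GG p K a τ p i = a
    simp only [GG]
    rw [if_pos (ZMod.val_lt _)]
  · show τ ^ p = 1
    exact tau_pow_self

omit hp hτ in
theorem mem_cent_iff {G : Type*} [Group G] {x z : G} :
    z ∈ Subgroup.centralizer {x} ↔ x * z = z * x := by
  rw [Subgroup.mem_centralizer_iff]
  simp

omit hp hτ in
theorem x_mem : xx p K a τ ∈ Subgroup.centralizer {xx p K a τ} := mem_cent_iff.mpr rfl

omit hp hτ in
theorem diag_mem {c : K} (hc : c ∈ Subgroup.centralizer ({a} : Set K)) :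
    (SemidirectProduct.inl (fun _ => c) : WreathP p K) ∈ Subgroup.centralizer {xx p K a τ} := by
  rw [mem_cent_iff]
  have hac : a * c = c * a := Subgroup.mem_centralizer_iff.mp hc a rfl
  ext i
  · simp only [SemidirectProduct.mul_left, SemidirectProduct.left_inl,
      SemidirectProduct.right_inl, map_one, Pi.mul_apply, MulAut.one_apply]
    rw [cycShift_apply]
    show (Pi.mulSingle (0 : ZMod p) a : ZMod p → K) i * c
        = c * (Pi.mulSingle (0 : ZMod p) a : ZMod p → K) i
    by_cases hi : i = 0
    · subst hi
      rw [Pi.mulSingle_eq_same]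
      exact hac
    · rw [Pi.mulSingle_eq_of_ne hi, one_mul, mul_one]
  · show τ * 1 = 1 * τ
    rw [mul_one, one_mul]

theorem right_one_mem {z : WreathP p K}
    (hz : z ∈ Subgroup.centralizer {xx p K a τ}) (h1 : z.right = 1) :
    ∃ c ∈ Subgroup.centralizer ({a} : Set K),
      z = SemidirectProduct.inl (fun _ => c) := by
  haveI : Fact p.Prime := ⟨hp⟩
  have ht : Multiplicative.toAdd τ ≠ 0 := t_ne hτ
  rw [mem_cent_iff] at hz
  have hrel : ∀ i : ZMod p,
      (Pi.mulSingle (0 : ZMod p) a : ZMod p → K) i * z.left (i - Multiplicative.toAdd τ)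
        = z.left i * (Pi.mulSingle (0 : ZMod p) a : ZMod p → K) i := by
    intro i
    have := congrArg SemidirectProduct.left hz
    simp only [SemidirectProduct.mul_left] at this
    have h2 := congrFun this i
    simp only [Pi.mul_apply] at h2
    rw [h1, map_one] at h2
    rw [cycShift_apply] at h2
    exact h2
  have hchain : ∀ i : ZMod p, i ≠ 0 → z.left (i - Multiplicative.toAdd τ) = z.left i := by
    intro i hi
    have := hrel i
    rwa [Pi.mulSingle_eq_of_ne hi, one_mul, mul_one] at this
  have hconstN : ∀ m : ℕ, m < p →
      z.left ((m : ZMod p) * Multiplicative.toAdd τ) = z.left 0 := by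
    intro m
    induction m with
    | zero => intro _; norm_num
    | succ m ih =>
      intro hm
      have hne : ((m + 1 : ℕ) : ZMod p) * Multiplicative.toAdd τ ≠ 0 := by
        apply mul_ne_zero _ ht
        rw [Ne, ZMod.natCast_eq_zero_iff]
        intro hdvd
        have := Nat.le_of_dvd (Nat.succ_pos m) hdvd
        omega
      have h2 := hchain _ hne
      have h3 : ((m + 1 : ℕ) : ZMod p) * Multiplicative.toAdd τ - Multiplicative.toAdd τ
          = (m : ZMod p) * Multiplicative.toAdd τ := by
        push_cast
        ring
      rw [h3] at h2
      rw [← h2]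
      exact ih (by omega)
  have hconst : ∀ i : ZMod p, z.left i = z.left 0 := by
    intro i
    have hi : ((i * (Multiplicative.toAdd τ)⁻¹).val : ZMod p) * Multiplicative.toAdd τ = i := by
      rw [ZMod.natCast_zmod_val, mul_assoc, inv_mul_cancel₀ ht, mul_one]
    rw [← hi]
    exact hconstN _ (ZMod.val_lt _)
  refine ⟨z.left 0, ?_, ?_⟩
  · rw [Subgroup.mem_centralizer_iff]
    rintro g rfl
    have := hrel 0
    rw [Pi.mulSingle_eq_same, hconst (0 - Multiplicative.toAdd τ)] at this
    exact this
  · ext i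
    · show z.left i = (fun _ => z.left 0) i
      exact hconst i
    · show z.right = 1
      exact h1

theorem tau_pow_val (σ : Multiplicative (ZMod p)) :
    τ ^ (Multiplicative.toAdd σ * (Multiplicative.toAdd τ)⁻¹).val = σ := by
  haveI : Fact p.Prime := ⟨hp⟩
  have ht : Multiplicative.toAdd τ ≠ 0 := t_ne hτ
  apply Multiplicative.toAdd.injective
  rw [toAdd_pow, nsmul_eq_mul, ZMod.natCast_zmod_val, mul_assoc, inv_mul_cancel₀ ht, mul_one]

theorem mem_struct {z : WreathP p K}
    (hz : z ∈ Subgroup.centralizer {xx p K a τ}) :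
    ∃ c ∈ Subgroup.centralizer ({a} : Set K), ∃ m : ℕ, m < p ∧
      z = SemidirectProduct.inl (fun _ => c) * (xx p K a τ) ^ m := by
  haveI : Fact p.Prime := ⟨hp⟩
  set m := (Multiplicative.toAdd z.right * (Multiplicative.toAdd τ)⁻¹).val with hm_def
  have hm : m < p := ZMod.val_lt _
  have hτm : τ ^ m = z.right := tau_pow_val hp hτ z.right
  have hw : z * ((xx p K a τ) ^ m)⁻¹ ∈ Subgroup.centralizer {xx p K a τ} :=
    mul_mem hz (inv_mem (pow_mem (x_mem K a) m))
  have hwr : (z * ((xx p K a τ) ^ m)⁻¹).right = 1 := by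
    have h1 : ((xx p K a τ) ^ m).right = τ ^ m := by
      rw [show ((xx p K a τ) ^ m).right
          = SemidirectProduct.rightHom ((xx p K a τ) ^ m) from rfl, map_pow]
      rfl
    have h2 : (((xx p K a τ) ^ m)⁻¹).right = (((xx p K a τ) ^ m).right)⁻¹ := rfl
    rw [SemidirectProduct.mul_right, h2, h1, hτm, mul_inv_cancel]
  obtain ⟨c, hc, hceq⟩ := right_one_mem K a hp hτ hw hwr
  refine ⟨c, hc, m, hm, ?_⟩
  rw [← hceq, inv_mul_cancel_right]

theorem left_neg_t (c : K) {m : ℕ} (hm : m < p) :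
    ((SemidirectProduct.inl (fun _ => c) : WreathP p K) * (xx p K a τ) ^ m).left
      (-(Multiplicative.toAdd τ)) = c := by
  haveI : Fact p.Prime := ⟨hp⟩
  have ht : Multiplicative.toAdd τ ≠ 0 := t_ne hτ
  rw [xx_pow K a hp hτ hm.le]
  simp only [SemidirectProduct.mul_left, SemidirectProduct.left_inl,
    SemidirectProduct.right_inl, map_one, Pi.mul_apply, MulAut.one_apply]
  show c * GG p K a τ m (-(Multiplicative.toAdd τ)) = c
  have hval : ((-(Multiplicative.toAdd τ)) * (Multiplicative.toAdd τ)⁻¹).val = p - 1 := by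
    rw [neg_mul, mul_inv_cancel₀ ht, val_neg_one' p hp.pos.ne']
  simp only [GG, hval]
  rw [if_neg (by omega), mul_one]

theorem normal_form (c : K) (m : ℕ) :
    (SemidirectProduct.inl (fun _ => c) : WreathP p K) * (xx p K a τ) ^ m
      = (SemidirectProduct.inl (fun _ => c * a ^ (m / p)) : WreathP p K)
          * (xx p K a τ) ^ (m % p) := by
  conv_lhs => rw [← Nat.div_add_mod m p, pow_add, pow_mul, xx_pow_p K a hp hτ, ← map_pow,
    ← mul_assoc, ← map_mul]
  rfl

theorem commute_diag_a : ∀ h ∈ Subgroup.centralizer {xx p K a τ},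
    Commute (SemidirectProduct.inl (fun _ => a) : WreathP p K) h := by
  intro h hmem
  rw [← xx_pow_p K a hp hτ]
  have : Commute (xx p K a τ) h := (mem_cent_iff.mp hmem)
  exact this.pow_left p

theorem diag_a_mem :
    (SemidirectProduct.inl (fun _ => a) : WreathP p K)
      ∈ Subgroup.centralizer {xx p K a τ} := by
  rw [mem_cent_iff, ← xx_pow_p K a hp hτ]
  exact Commute.self_pow _ _

theorem right_of_form (c : K) (m : ℕ) :
    ((SemidirectProduct.inl (fun _ => c) : WreathP p K) * (xx p K a τ) ^ m).right = τ ^ m := by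
  rw [SemidirectProduct.mul_right, SemidirectProduct.right_inl, one_mul,
    show ((xx p K a τ) ^ m).right = SemidirectProduct.rightHom ((xx p K a τ) ^ m) from rfl,
      map_pow]
  rfl

theorem pow_eq_one_imp {m : ℕ} (hm : m < p) (h : τ ^ m = 1) : m = 0 := by
  haveI : Fact p.Prime := ⟨hp⟩
  have ht : Multiplicative.toAdd τ ≠ 0 := t_ne hτ
  have h2 : ((m : ZMod p)) * Multiplicative.toAdd τ = 0 := by
    have := congrArg Multiplicative.toAdd h
    rwa [toAdd_pow, toAdd_one, nsmul_eq_mul] at this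
  rcases mul_eq_zero.mp h2 with h3 | h3
  · have := (ZMod.natCast_eq_zero_iff m p).mp h3
    exact Nat.eq_zero_of_dvd_of_lt this hm
  · exact absurd h3 ht

end CCE

set_option maxHeartbeats 1000000 in
/-- Let `p` be a prime, `K` a group, `H = K ≀ ℤ/p`, `a ∈ K`, `τ` a nonzero
element of `ℤ/p`, and `x = ((a,1,…,1),τ) ∈ H`.  Then `x^p = diag(a)`, the cyclic subgroup
`D = ⟨diag(a)⟩` is contained in the center of the centralizer `Z_H(x)`, and the quotient
`Z_H(x)/D` is isomorphic to `(Z_K(a)/⟨a⟩) × ℤ/p` — expressed here, via the first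
isomorphism theorem, by a surjective homomorphism `Z_H(x) → (Z_K(a)/⟨a⟩) × ℤ/p` whose
kernel is exactly `D`.  In particular `Z_H(x)` is a central extension of
`(Z_K(a)/⟨a⟩) × ℤ/p` by the cyclic group generated by `a`. -/
theorem centralizer_central_extension
    (p : ℕ) (hp : p.Prime) (K : Type*) [Group K] (a : K)
    (τ : Multiplicative (ZMod p)) (hτ : τ ≠ 1) :
    (⟨Pi.mulSingle (0 : ZMod p) a, τ⟩ : WreathP p K) ^ p =
        SemidirectProduct.inl (fun _ => a) ∧
    ∃ hd : (SemidirectProduct.inl (fun _ => a) : WreathP p K) ∈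
        Subgroup.centralizer {(⟨Pi.mulSingle (0 : ZMod p) a, τ⟩ : WreathP p K)},
      (∀ h ∈ Subgroup.centralizer {(⟨Pi.mulSingle (0 : ZMod p) a, τ⟩ : WreathP p K)},
        Commute (SemidirectProduct.inl (fun _ => a) : WreathP p K) h) ∧
      ∃ ψ : ↥(Subgroup.centralizer
              {(⟨Pi.mulSingle (0 : ZMod p) a, τ⟩ : WreathP p K)}) →*
            (↥(Subgroup.centralizer ({a} : Set K)) ⧸ Subgroup.zpowers (aZ K a)) ×
              Multiplicative (ZMod p),
        Function.Surjective ψ ∧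
        ψ.ker = Subgroup.zpowers
          (⟨SemidirectProduct.inl (fun _ => a), hd⟩ :
            ↥(Subgroup.centralizer
              {(⟨Pi.mulSingle (0 : ZMod p) a, τ⟩ : WreathP p K)})) := by
  haveI : Fact p.Prime := ⟨hp⟩
  refine ⟨CCE.xx_pow_p K a hp hτ, CCE.diag_a_mem K a hp hτ, CCE.commute_diag_a K a hp hτ, ?_⟩
  set Z : Subgroup (WreathP p K) :=
    Subgroup.centralizer {(⟨Pi.mulSingle (0 : ZMod p) a, τ⟩ : WreathP p K)} with hZdef
  have hZx : Z = Subgroup.centralizer {CCE.xx p K a τ} := rfl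
  -- the first-component map
  have hval1 : ∀ z : ↥Z,
      (z : WreathP p K).left (-(Multiplicative.toAdd τ)) ∈
        Subgroup.centralizer ({a} : Set K) := by
    intro z
    obtain ⟨c, hc, m, hm, hzeq⟩ := CCE.mem_struct K a hp hτ z.2
    rw [show (z : WreathP p K) = _ from hzeq, CCE.left_neg_t K a hp hτ c hm]
    exact hc
  set f1 : ↥Z → (↥(Subgroup.centralizer ({a} : Set K)) ⧸ Subgroup.zpowers (aZ K a)) :=
    fun z => QuotientGroup.mk ⟨(z : WreathP p K).left (-(Multiplicative.toAdd τ)), hval1 z⟩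
    with hf1def
  have f1_spec : ∀ (c : K) (hc : c ∈ Subgroup.centralizer ({a} : Set K)) (m : ℕ),
      m < p → ∀ z : ↥Z,
      (z : WreathP p K) = SemidirectProduct.inl (fun _ => c) * (CCE.xx p K a τ) ^ m →
      f1 z = QuotientGroup.mk ⟨c, hc⟩ := by
    intro c hc m hm z hzeq
    have : (⟨(z : WreathP p K).left (-(Multiplicative.toAdd τ)), hval1 z⟩ :
        ↥(Subgroup.centralizer ({a} : Set K))) = ⟨c, hc⟩ := by
      apply Subtype.ext
      show (z : WreathP p K).left (-(Multiplicative.toAdd τ)) = c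
      rw [hzeq, CCE.left_neg_t K a hp hτ c hm]
    rw [hf1def]
    simp only
    rw [this]
  have f1_one : f1 1 = 1 := by
    have h0 : (⟨((1 : ↥Z) : WreathP p K).left (-(Multiplicative.toAdd τ)), hval1 1⟩ :
        ↥(Subgroup.centralizer ({a} : Set K))) = 1 := Subtype.ext rfl
    rw [hf1def]
    simp only
    rw [h0, QuotientGroup.mk_one]
  have f1_mul : ∀ z w : ↥Z, f1 (z * w) = f1 z * f1 w := by
    intro z w
    obtain ⟨c, hc, m, hm, hzeq⟩ := CCE.mem_struct K a hp hτ z.2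
    obtain ⟨c', hc', m', hm', hweq⟩ := CCE.mem_struct K a hp hτ w.2
    have hcomm : (CCE.xx p K a τ) ^ m * SemidirectProduct.inl (fun _ => c')
        = (SemidirectProduct.inl (fun _ => c') : WreathP p K) * (CCE.xx p K a τ) ^ m := by
      have hx : Commute (CCE.xx p K a τ)
          (SemidirectProduct.inl (fun _ => c') : WreathP p K) :=
        CCE.mem_cent_iff.mp (CCE.diag_mem K a hc')
      exact (hx.pow_left m)
    have hprod : ((z * w : ↥Z) : WreathP p K)
        = SemidirectProduct.inl (fun _ => c * c' * a ^ ((m + m') / p))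
            * (CCE.xx p K a τ) ^ ((m + m') % p) := by
      rw [Subgroup.coe_mul, hzeq, hweq, mul_assoc, ← mul_assoc ((CCE.xx p K a τ) ^ m),
        hcomm, mul_assoc, ← pow_add, ← mul_assoc, ← map_mul]
      exact CCE.normal_form K a hp hτ (c * c') (m + m')
    have hmem : c * c' * a ^ ((m + m') / p) ∈ Subgroup.centralizer ({a} : Set K) :=
      mul_mem (mul_mem hc hc') (pow_mem (aZ K a).2 _)
    have h1 := f1_spec _ hmem _ (Nat.mod_lt _ hp.pos) _ hprod
    have h2 := f1_spec _ hc _ hm _ hzeq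
    have h3 := f1_spec _ hc' _ hm' _ hweq
    rw [h1, h2, h3, ← QuotientGroup.mk_mul]
    have key : (⟨c * c' * a ^ ((m + m') / p), hmem⟩ :
        ↥(Subgroup.centralizer ({a} : Set K)))
        = (⟨c, hc⟩ * ⟨c', hc'⟩ : ↥(Subgroup.centralizer ({a} : Set K)))
            * (aZ K a) ^ ((m + m') / p) := by
      apply Subtype.ext
      rfl
    rw [key, QuotientGroup.mk_mul]
    have hone : (QuotientGroup.mk ((aZ K a) ^ ((m + m') / p)) :
        ↥(Subgroup.centralizer ({a} : Set K)) ⧸ Subgroup.zpowers (aZ K a)) = 1 := by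
      rw [QuotientGroup.eq_one_iff]
      exact pow_mem (Subgroup.mem_zpowers _) _
    rw [hone, mul_one]
  set ψ : ↥Z →*
      (↥(Subgroup.centralizer ({a} : Set K)) ⧸ Subgroup.zpowers (aZ K a)) ×
        Multiplicative (ZMod p) :=
    { toFun := fun z => (f1 z, (z : WreathP p K).right)
      map_one' := Prod.ext_iff.mpr ⟨f1_one, rfl⟩
      map_mul' := fun z w => Prod.ext_iff.mpr ⟨f1_mul z w, rfl⟩ } with hψdef
  have hψ_apply : ∀ z : ↥Z, ψ z = (f1 z, (z : WreathP p K).right) := fun z => rfl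
  refine ⟨ψ, ?_, ?_⟩
  · -- surjectivity
    rintro ⟨q, σ⟩
    obtain ⟨cz, rfl⟩ := QuotientGroup.mk'_surjective (Subgroup.zpowers (aZ K a)) q
    set m := (Multiplicative.toAdd σ * (Multiplicative.toAdd τ)⁻¹).val with hmdef
    have hm : m < p := ZMod.val_lt _
    have hτm : τ ^ m = σ := CCE.tau_pow_val hp hτ σ
    set zelt : ↥Z := ⟨SemidirectProduct.inl (fun _ => (cz : K)) * (CCE.xx p K a τ) ^ m,
      mul_mem (CCE.diag_mem K a cz.2) (pow_mem (CCE.x_mem K a) m)⟩ with hzelt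
    refine ⟨zelt, ?_⟩
    have e1 : f1 zelt = QuotientGroup.mk ⟨(cz : K), cz.2⟩ :=
      f1_spec (cz : K) cz.2 m hm zelt rfl
    have e2 : (zelt : WreathP p K).right = σ := by
      rw [hzelt]
      show (SemidirectProduct.inl (fun _ => (cz : K)) * (CCE.xx p K a τ) ^ m :
        WreathP p K).right = σ
      rw [CCE.right_of_form K a hp hτ (cz : K) m, hτm]
    rw [hψ_apply]
    exact Prod.ext_iff.mpr ⟨e1.trans rfl, e2⟩
  · -- kernel
    apply le_antisymm
    · intro z hz
      rw [MonoidHom.mem_ker, hψ_apply] at hz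
      have h1 : f1 z = 1 := congrArg Prod.fst hz
      have h2 : (z : WreathP p K).right = 1 := congrArg Prod.snd hz
      obtain ⟨c, hc, m, hm, hzeq⟩ := CCE.mem_struct K a hp hτ z.2
      have hm0 : m = 0 := by
        apply CCE.pow_eq_one_imp hp hτ hm
        rw [← CCE.right_of_form K a hp hτ c m, ← hzeq]
        exact h2
      subst hm0
      rw [pow_zero, mul_one] at hzeq
      have hf : f1 z = QuotientGroup.mk ⟨c, hc⟩ :=
        f1_spec c hc 0 hp.pos z (by rw [hzeq, pow_zero, mul_one])
      rw [hf, QuotientGroup.eq_one_iff] at h1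
      obtain ⟨k, hk⟩ := Subgroup.mem_zpowers_iff.mp h1
      refine Subgroup.mem_zpowers_iff.mpr ⟨k, ?_⟩
      apply Subtype.ext
      have hck : a ^ k = c := by
        have := congrArg (Subtype.val) hk
        rwa [SubgroupClass.coe_zpow] at this
      rw [SubgroupClass.coe_zpow]
      show ((SemidirectProduct.inl (fun _ => a) : WreathP p K)) ^ k = (z : WreathP p K)
      rw [← map_zpow, hzeq]
      congr 1
      funext i
      show a ^ k = c
      exact hck
    · rw [Subgroup.zpowers_le, MonoidHom.mem_ker, hψ_apply]
      have hf : f1 ⟨SemidirectProduct.inl (fun _ => a), CCE.diag_a_mem K a hp hτ⟩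
          = QuotientGroup.mk ⟨a, (aZ K a).2⟩ :=
        f1_spec a (aZ K a).2 0 hp.pos _ (by rw [pow_zero, mul_one])
      have hf1 : f1 ⟨SemidirectProduct.inl (fun _ => a), CCE.diag_a_mem K a hp hτ⟩ = 1 := by
        rw [hf, QuotientGroup.eq_one_iff]
        exact Subgroup.mem_zpowers _
      exact Prod.ext_iff.mpr ⟨hf1, rfl⟩
end

section
/- Let p be a prime, K a finite group, H = K ≀ ℤ/p, a ∈ K, τ a nonzero element of ℤ/p, and x = ((a,1,…,1),τ) ∈ H. Then the centralizer Z_H(x) of x in H is isoclinic to the direct product Z_K(a) × ℤ/p. -/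
open scoped commutatorElement

/-- Two groups `G₁`, `G₂` with centers `Z₁`, `Z₂` are *isoclinic* if there are
isomorphisms `i : G₁/Z₁ ≃ G₂/Z₂` and `j : [G₁,G₁] ≃ [G₂,G₂]` compatible with the
commutator maps: whenever `x'Z₂ = i(xZ₁)` and `y'Z₂ = i(yZ₁)` one has
`j([x,y]) = [x',y']`. -/
def IsIsoclinic (G₁ G₂ : Type*) [Group G₁] [Group G₂] : Prop :=
  ∃ (i : (G₁ ⧸ Subgroup.center G₁) ≃* (G₂ ⧸ Subgroup.center G₂))
    (j : commutator G₁ ≃* commutator G₂),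
    ∀ (x y : G₁) (x' y' : G₂),
      (QuotientGroup.mk x' : G₂ ⧸ Subgroup.center G₂) = i (QuotientGroup.mk x) →
      (QuotientGroup.mk y' : G₂ ⧸ Subgroup.center G₂) = i (QuotientGroup.mk y) →
      (j ⟨⁅x, y⁆, Subgroup.commutator_mem_commutator (Subgroup.mem_top x)
          (Subgroup.mem_top y)⟩ : G₂) = ⁅x', y'⁆

section AuxIsoclinic

variable {Q G : Type*} [Group Q] [Group G]

lemma aux_comm_mul_center_left {g h z : G} (hz : z ∈ Subgroup.center G) :
    ⁅g * z, h⁆ = ⁅g, h⁆ := by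
  have hz' : ∀ w : G, w * z = z * w := fun w => Subgroup.mem_center_iff.mp hz w
  have hzh : z * h * z⁻¹ = h := by rw [← hz' h, mul_assoc, mul_inv_cancel, mul_one]
  calc (g * z) * h * (g * z)⁻¹ * h⁻¹
      = g * (z * h * z⁻¹) * g⁻¹ * h⁻¹ := by group
    _ = g * h * g⁻¹ * h⁻¹ := by rw [hzh]

lemma aux_comm_mul_center_right {g h z : G} (hz : z ∈ Subgroup.center G) :
    ⁅g, h * z⁆ = ⁅g, h⁆ := by
  have hz' : ∀ w : G, w * z = z * w := fun w => Subgroup.mem_center_iff.mp hz w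
  have hzh : z * g⁻¹ * z⁻¹ = g⁻¹ := by rw [← hz' g⁻¹, mul_assoc, mul_inv_cancel, mul_one]
  calc g * (h * z) * g⁻¹ * (h * z)⁻¹
      = g * h * (z * g⁻¹ * z⁻¹) * h⁻¹ := by group
    _ = g * h * g⁻¹ * h⁻¹ := by rw [hzh]

lemma IsIsoclinic.symm' {G₁ G₂ : Type*} [Group G₁] [Group G₂]
    (h : IsIsoclinic G₁ G₂) : IsIsoclinic G₂ G₁ := by
  obtain ⟨i, j, hij⟩ := h
  refine ⟨i.symm, j.symm, ?_⟩
  intro x y x' y' hx hy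
  have hx2 : (QuotientGroup.mk x : G₂ ⧸ Subgroup.center G₂) = i (QuotientGroup.mk x') := by
    rw [hx, MulEquiv.apply_symm_apply]
  have hy2 : (QuotientGroup.mk y : G₂ ⧸ Subgroup.center G₂) = i (QuotientGroup.mk y') := by
    rw [hy, MulEquiv.apply_symm_apply]
  have h1 := hij x' y' x y hx2 hy2
  have h2 : j ⟨⁅x', y'⁆, Subgroup.commutator_mem_commutator (Subgroup.mem_top x')
        (Subgroup.mem_top y')⟩
      = ⟨⁅x, y⁆, Subgroup.commutator_mem_commutator (Subgroup.mem_top x)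
        (Subgroup.mem_top y)⟩ := Subtype.ext h1
  rw [← h2, MulEquiv.symm_apply_apply]

lemma IsIsoclinic.trans' {G₁ G₂ G₃ : Type*} [Group G₁] [Group G₂] [Group G₃]
    (h12 : IsIsoclinic G₁ G₂) (h23 : IsIsoclinic G₂ G₃) : IsIsoclinic G₁ G₃ := by
  obtain ⟨i1, j1, h1⟩ := h12
  obtain ⟨i2, j2, h2⟩ := h23
  refine ⟨i1.trans i2, j1.trans j2, ?_⟩
  intro x y x' y' hx hy
  obtain ⟨x'', hx''⟩ := QuotientGroup.mk_surjective (i1 (QuotientGroup.mk x))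
  obtain ⟨y'', hy''⟩ := QuotientGroup.mk_surjective (i1 (QuotientGroup.mk y))
  have e1 := h1 x y x'' y'' hx'' hy''
  have e1' : j1 ⟨⁅x, y⁆, Subgroup.commutator_mem_commutator (Subgroup.mem_top x)
        (Subgroup.mem_top y)⟩
      = ⟨⁅x'', y''⁆, Subgroup.commutator_mem_commutator (Subgroup.mem_top x'')
        (Subgroup.mem_top y'')⟩ := Subtype.ext e1
  have e2 := h2 x'' y'' x' y' (by rw [hx'', hx]; rfl) (by rw [hy'', hy]; rfl)
  show (j2 (j1 _) : G₃) = ⁅x', y'⁆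
  rw [e1']
  exact e2

/-- If `f : Q →* G` is injective and every element of `G` is `f q * z` with `z` central,
then `Q` and `G` are isoclinic. -/
lemma isoclinic_of_hom (f : Q →* G) (hf : Function.Injective f)
    (hd : ∀ g : G, ∃ q : Q, ∃ z ∈ Subgroup.center G, g = f q * z) :
    IsIsoclinic Q G := by
  have hcent : ∀ q : Q, q ∈ Subgroup.center Q ↔ f q ∈ Subgroup.center G := by
    intro q
    constructor
    · intro hq
      rw [Subgroup.mem_center_iff]
      intro g
      obtain ⟨q', z, hz, rfl⟩ := hd g
      have hz' : ∀ w : G, w * z = z * w := fun w => Subgroup.mem_center_iff.mp hz w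
      have hqq' : f q' * f q = f q * f q' := by
        rw [← map_mul, ← map_mul, Subgroup.mem_center_iff.mp hq q']
      calc f q' * z * f q = f q' * f q * z := by
            rw [mul_assoc, ← hz' (f q), mul_assoc]
        _ = f q * (f q' * z) := by rw [hqq', mul_assoc]
    · intro hq
      rw [Subgroup.mem_center_iff]
      intro q'
      apply hf
      rw [map_mul, map_mul, Subgroup.mem_center_iff.mp hq (f q')]
  -- the quotient isomorphism
  let Φ : Q →* G ⧸ Subgroup.center G := (QuotientGroup.mk' _).comp f
  have hker : Subgroup.center Q ≤ Φ.ker := by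
    intro q hq
    have : ((f q : G) : G ⧸ Subgroup.center G) = 1 :=
      (QuotientGroup.eq_one_iff _).mpr ((hcent q).mp hq)
    simpa [Φ, MonoidHom.mem_ker] using this
  let ψ := QuotientGroup.lift _ Φ hker
  have hψmk : ∀ q : Q, ψ (QuotientGroup.mk q) = QuotientGroup.mk (f q) := fun q => rfl
  have hbij : Function.Bijective ψ := by
    constructor
    · rw [injective_iff_map_eq_one]
      intro qb
      induction qb using QuotientGroup.induction_on with
      | _ q =>
        intro h1
        rw [hψmk, QuotientGroup.eq_one_iff] at h1
        rw [QuotientGroup.eq_one_iff]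
        exact (hcent q).mpr h1
    · intro gb
      induction gb using QuotientGroup.induction_on with
      | _ g =>
        obtain ⟨q, z, hz, rfl⟩ := hd g
        refine ⟨QuotientGroup.mk q, ?_⟩
        rw [hψmk, QuotientGroup.eq]
        simpa using hz
  -- the commutator isomorphism
  have hmap : Subgroup.map f (commutator Q) = commutator G := by
    apply le_antisymm
    · rw [commutator, Subgroup.map_commutator]
      exact Subgroup.commutator_mono le_top le_top
    · rw [commutator, Subgroup.commutator_le]
      intro g₁ _ g₂ _
      obtain ⟨q₁, z₁, hz₁, rfl⟩ := hd g₁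
      obtain ⟨q₂, z₂, hz₂, rfl⟩ := hd g₂
      rw [aux_comm_mul_center_left hz₁, aux_comm_mul_center_right hz₂,
        ← map_commutatorElement]
      exact Subgroup.mem_map.mpr ⟨⁅q₁, q₂⁆,
        Subgroup.commutator_mem_commutator (Subgroup.mem_top q₁) (Subgroup.mem_top q₂), rfl⟩
  let j : commutator Q ≃* commutator G :=
    ((commutator Q).equivMapOfInjective f hf).trans (MulEquiv.subgroupCongr hmap)
  have hj : ∀ u : commutator Q, (j u : G) = f u := fun u => rfl
  refine ⟨MulEquiv.ofBijective ψ hbij, j, ?_⟩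
  intro x y x' y' hx hy
  have hx2 : x' = f x * ((f x)⁻¹ * x') := by group
  have hy2 : y' = f y * ((f y)⁻¹ * y') := by group
  have hxz : (f x)⁻¹ * x' ∈ Subgroup.center G := by
    rw [← QuotientGroup.eq]
    have : (MulEquiv.ofBijective ψ hbij) (QuotientGroup.mk x) = QuotientGroup.mk (f x) :=
      hψmk x
    rw [this] at hx
    exact hx.symm
  have hyz : (f y)⁻¹ * y' ∈ Subgroup.center G := by
    rw [← QuotientGroup.eq]
    have : (MulEquiv.ofBijective ψ hbij) (QuotientGroup.mk y) = QuotientGroup.mk (f y) :=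
      hψmk y
    rw [this] at hy
    exact hy.symm
  rw [hj, map_commutatorElement]
  conv_rhs => rw [hx2, hy2]
  rw [aux_comm_mul_center_left hxz, aux_comm_mul_center_right hyz]

end AuxIsoclinic

/-- Let `p` be a prime, `K` a finite group, `H = K ≀ ℤ/p`, `a ∈ K`, `τ` a
nonzero element of `ℤ/p`, and `x = ((a,1,…,1),τ) ∈ H`.  Then the centralizer `Z_H(x)` of
`x` in `H` is isoclinic to the direct product `Z_K(a) × ℤ/p`. -/
theorem centralizer_isoclinic_prod
    (p : ℕ) (hp : p.Prime) (K : Type*) [Group K] [Finite K] (a : K)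
    (τ : Multiplicative (ZMod p)) (hτ : τ ≠ 1) :
    IsIsoclinic
      ↥(Subgroup.centralizer {(⟨Pi.mulSingle (0 : ZMod p) a, τ⟩ : WreathP p K)})
      (↥(Subgroup.centralizer ({a} : Set K)) × Multiplicative (ZMod p)) := by
  haveI := Fact.mk hp
  set t : ZMod p := Multiplicative.toAdd τ with ht
  have htne : t ≠ 0 := by
    intro h
    exact hτ (Multiplicative.toAdd.injective h)
  set b : ZMod p → K := Pi.mulSingle 0 a with hbdef
  set x : WreathP p K := ⟨b, τ⟩ with hxdef
  set Q := ↥(Subgroup.centralizer ({a} : Set K)) with hQ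
  -- Step 1 : Q is isoclinic to the product, via q ↦ (q, 1)
  have h2 : IsIsoclinic Q (Q × Multiplicative (ZMod p)) := by
    apply isoclinic_of_hom (MonoidHom.inl Q (Multiplicative (ZMod p)))
      (fun q q' h => congrArg Prod.fst h)
    intro g
    refine ⟨g.1, ((1 : Q), g.2), ?_, ?_⟩
    · rw [Subgroup.mem_center_iff]
      intro w
      ext
      · simp
      · exact congrArg Multiplicative.toAdd (mul_comm _ _)
    · ext <;> simp [MonoidHom.inl]
  -- Step 2 : Q is isoclinic to the centralizer of x, via the diagonal embedding
  have hxmem : x ∈ Subgroup.centralizer ({x} : Set (WreathP p K)) :=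
    Subgroup.mem_centralizer_singleton_iff.mpr rfl
  -- diagonal elements
  have hdiagmem : ∀ c : K, c ∈ Subgroup.centralizer ({a} : Set K) →
      (⟨fun _ => c, 1⟩ : WreathP p K) ∈ Subgroup.centralizer ({x} : Set (WreathP p K)) := by
    intro c hc
    have hca : c * a = a * c := Subgroup.mem_centralizer_singleton_iff.mp hc
    rw [Subgroup.mem_centralizer_singleton_iff]
    ext i
    · show ((fun _ => c) : ZMod p → K) i * (cycShift p K 1 b) i
        = b i * (cycShift p K τ (fun _ => c)) i
      show c * b (i - Multiplicative.toAdd 1) = b i * c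
      rw [toAdd_one, sub_zero]
      by_cases hi : i = 0
      · subst hi
        simpa [hbdef, Pi.mulSingle_eq_same] using hca
      · simp [hbdef, Pi.mulSingle_eq_of_ne hi]
    · show (1 : Multiplicative (ZMod p)) * τ = τ * 1
      rw [one_mul, mul_one]
  let f : Q →* ↥(Subgroup.centralizer ({x} : Set (WreathP p K))) :=
  { toFun := fun c => ⟨⟨fun _ => (c : K), 1⟩, hdiagmem (c : K) c.2⟩
    map_one' := by
      apply Subtype.ext
      ext i
      · rfl
      · rfl
    map_mul' := fun c c' => by
      apply Subtype.ext
      ext i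
      · show ((c : K) * (c' : K)) = (c : K) * (cycShift p K 1 (fun _ => (c' : K))) i
        show ((c : K) * (c' : K))
          = (c : K) * (fun _ => (c' : K)) (i - Multiplicative.toAdd 1)
        rfl
      · show (1 : Multiplicative (ZMod p)) = 1 * 1
        rw [mul_one] }
  have hfinj : Function.Injective f := by
    intro c c' h
    apply Subtype.ext
    have h1 : ((⟨fun _ => (c : K), 1⟩ : WreathP p K)) = ⟨fun _ => (c' : K), 1⟩ :=
      congrArg Subtype.val h
    have h2 := congrFun (congrArg SemidirectProduct.left h1) 0
    exact h2
  -- x is central in its own centralizer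
  have hxcent : (⟨x, hxmem⟩ : ↥(Subgroup.centralizer ({x} : Set (WreathP p K))))
      ∈ Subgroup.center ↥(Subgroup.centralizer ({x} : Set (WreathP p K))) := by
    rw [Subgroup.mem_center_iff]
    intro g
    apply Subtype.ext
    exact Subgroup.mem_centralizer_singleton_iff.mp g.2
  have h1 : IsIsoclinic Q ↥(Subgroup.centralizer ({x} : Set (WreathP p K))) := by
    apply isoclinic_of_hom f hfinj
    intro g
    -- decompose g as a diagonal element times a power of x
    set s : ZMod p := Multiplicative.toAdd (g : WreathP p K).right with hs
    set k : ℕ := (s * t⁻¹).val with hk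
    have hkt : (k : ZMod p) * t = s := by
      rw [hk, ZMod.natCast_rightInverse (s * t⁻¹), mul_assoc,
        inv_mul_cancel₀ htne, mul_one]
    set gv : WreathP p K := (g : WreathP p K) with hgv
    have hστ : gv.right = τ ^ k := by
      apply Multiplicative.toAdd.injective
      rw [toAdd_pow, nsmul_eq_mul, ← ht]
      exact hkt.symm
    set hv : WreathP p K := gv * (x ^ k)⁻¹ with hhv
    have hvmem : hv ∈ Subgroup.centralizer ({x} : Set (WreathP p K)) :=
      mul_mem g.2 (inv_mem (pow_mem hxmem k))
    set w : ZMod p → K := hv.left with hw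
    clear_value w
    have hvr : hv.right = 1 := by
      rw [hhv]
      show gv.right * ((x ^ k)⁻¹).right = 1
      have h1 : ((x ^ k)⁻¹).right = ((x ^ k).right)⁻¹ := rfl
      have h2 : (x ^ k).right = τ ^ k := by
        show SemidirectProduct.rightHom (x ^ k) = τ ^ k
        rw [map_pow]
        rfl
      rw [h1, h2, hστ, mul_inv_cancel]
    have hvx : x * hv = hv * x :=
      (Subgroup.mem_centralizer_singleton_iff.mp hvmem).symm
    clear_value hv
    have hrel : ∀ i : ZMod p, b i * w (i - t) = w i * b i := by
      intro i
      have e : (x * hv).left = (hv * x).left := congrArg _ hvx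
      rw [SemidirectProduct.mul_left, SemidirectProduct.mul_left, hvr, ← hw] at e
      have e2 := congrFun e i
      show b i * w (i - Multiplicative.toAdd τ) = w i * b i
      simpa [cycShift, hxdef, ← ht] using e2
    have hstep : ∀ i : ZMod p, i ≠ 0 → w (i - t) = w i := by
      intro i hi
      have e := hrel i
      rwa [hbdef, Pi.mulSingle_eq_of_ne hi, one_mul, mul_one] at e
    have key : ∀ n : ℕ, n < p → w ((n : ZMod p) * t) = w 0 := by
      intro n
      induction n with
      | zero => intro _; norm_num
      | succ m ih =>
        intro hlt
        have hm : ((m + 1 : ℕ) : ZMod p) ≠ 0 := by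
          rw [Ne, ZMod.natCast_eq_zero_iff]
          exact fun hdvd =>
            absurd (Nat.le_of_dvd (Nat.succ_pos m) hdvd) (not_le.mpr hlt)
        have hne : ((m + 1 : ℕ) : ZMod p) * t ≠ 0 := mul_ne_zero hm htne
        have e := hstep _ hne
        have e2 : ((m + 1 : ℕ) : ZMod p) * t - t = ((m : ℕ) : ZMod p) * t := by
          push_cast
          ring
        rw [e2] at e
        rw [← e]
        exact ih (Nat.lt_of_succ_lt hlt)
    have hconst : ∀ i : ZMod p, w i = w 0 := by
      intro i
      have h1 : (((i * t⁻¹).val : ℕ) : ZMod p) * t = i := by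
        rw [ZMod.natCast_rightInverse (i * t⁻¹), mul_assoc,
          inv_mul_cancel₀ htne, mul_one]
      have h2 := key (i * t⁻¹).val (ZMod.val_lt _)
      rwa [h1] at h2
    have hw0 : w 0 * a = a * w 0 := by
      have e := hrel 0
      rw [hconst (0 - t)] at e
      have hb0 : b 0 = a := by simp [hbdef]
      rw [hb0] at e
      exact e.symm
    refine ⟨⟨w 0, Subgroup.mem_centralizer_singleton_iff.mpr hw0⟩,
      ⟨x, hxmem⟩ ^ k, pow_mem hxcent k, ?_⟩
    apply Subtype.ext
    have hxk : (((⟨x, hxmem⟩ : Subgroup.centralizer ({x} : Set (WreathP p K))) ^ k :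
        Subgroup.centralizer ({x} : Set (WreathP p K))) : WreathP p K) = x ^ k :=
      SubmonoidClass.coe_pow _ _
    show gv = (⟨fun _ => w 0, 1⟩ : WreathP p K) * _
    rw [hxk]
    have hveq : (⟨fun _ => w 0, 1⟩ : WreathP p K) = hv := by
      ext i
      · show w 0 = hv.left i
        rw [← hw]
        exact (hconst i).symm
      · exact hvr.symm
    rw [hveq, hhv, inv_mul_cancel_right]
  exact h1.symm'.trans' h2
end

section
/- Let p be a prime, K a group, H = K ≀ ℤ/p, and let x = ((x_1,…,x_p),0) be an element of the subgroup K^p of H. If some element of the centralizer Z_H(x) has nonzero image under the projection π : H → ℤ/p, then there exist c ∈ K^p and x' ∈ K such that c x c⁻¹ = diag(x'), i.e. x is conjugate by an element of K^p to a diagonal element. -/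
/-- Let `p` be a prime, `K` a group, `H = K ≀ ℤ/p`, and let
`x = ((x_1,…,x_p),0)` be an element of the subgroup `K^p` of `H`.  If some element of
the centralizer `Z_H(x)` has nonzero image under the projection `π : H → ℤ/p`, then
there exist `c ∈ K^p` and `x' ∈ K` such that `c x c⁻¹ = diag(x')`. -/
theorem conj_to_diagonal_of_centralizer_surjects
    (p : ℕ) (hp : p.Prime) (K : Type*) [Group K] (f : ZMod p → K)
    (hx : ∃ h ∈ Subgroup.centralizer {(SemidirectProduct.inl f : WreathP p K)},
      SemidirectProduct.rightHom h ≠ 1) :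
    ∃ (c : ZMod p → K) (x' : K),
      SemidirectProduct.inl c * SemidirectProduct.inl f * (SemidirectProduct.inl c)⁻¹ =
        (SemidirectProduct.inl (fun _ => x') : WreathP p K) := by
  haveI : Fact p.Prime := ⟨hp⟩
  obtain ⟨h, hc, hτ⟩ := hx
  set g : ZMod p → K := h.left with hg
  set t : ZMod p := Multiplicative.toAdd h.right with htdef
  have htne : t ≠ 0 := by
    intro h0
    apply hτ
    have : h.right = 1 := by
      have := congrArg Multiplicative.ofAdd h0
      exact this
    simp [SemidirectProduct.rightHom, this]
  have heq : SemidirectProduct.inl f * h = h * SemidirectProduct.inl f :=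
    Subgroup.mem_centralizer_iff.mp hc _ rfl
  have hleft := congrArg SemidirectProduct.left heq
  have key : ∀ i, f (i - t) = (g i)⁻¹ * f i * g i := by
    intro i
    have := congrFun hleft i
    simp only [SemidirectProduct.mul_left, SemidirectProduct.left_inl,
      SemidirectProduct.right_inl, map_one, MulAut.one_apply, Pi.mul_apply] at this
    -- this : f i * g i = g i * (cycShift p K h.right f) i
    have h2 : f i * g i = g i * f (i - t) := this
    rw [mul_assoc, h2]
    group
  -- define d by recursion
  let d : ℕ → K := fun k => Nat.rec 1 (fun k dk => g (((k+1 : ℕ) : ZMod p) * t) * dk) k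
  have hd : ∀ k : ℕ, f ((k : ZMod p) * t) = d k * f 0 * (d k)⁻¹ := by
    intro k
    induction k with
    | zero => simp [d]
    | succ k ih =>
      have hk := key (((k+1 : ℕ) : ZMod p) * t)
      have hsub : ((k+1 : ℕ) : ZMod p) * t - t = (k : ZMod p) * t := by
        push_cast
        ring
      rw [hsub, ih] at hk
      have : f (((k+1 : ℕ) : ZMod p) * t)
          = g (((k+1 : ℕ) : ZMod p) * t) * (d k * f 0 * (d k)⁻¹) *
            (g (((k+1 : ℕ) : ZMod p) * t))⁻¹ := by
        rw [hk]; group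
      rw [this]
      show _ = (g (((k+1 : ℕ) : ZMod p) * t) * d k) * f 0 * (g (((k+1 : ℕ) : ZMod p) * t) * d k)⁻¹
      group
  refine ⟨fun i => (d ((i * t⁻¹).val))⁻¹, f 0, ?_⟩
  rw [← MonoidHom.map_inv SemidirectProduct.inl, ← MonoidHom.map_mul, ← MonoidHom.map_mul]
  congr 1
  funext i
  simp only [Pi.mul_apply, Pi.inv_apply, inv_inv]
  have hcast : (((i * t⁻¹).val : ℕ) : ZMod p) = i * t⁻¹ := by
    simp [ZMod.natCast_val, ZMod.cast_id]
  have hi : (((i * t⁻¹).val : ℕ) : ZMod p) * t = i := by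
    rw [hcast, mul_assoc, inv_mul_cancel₀ htne, mul_one]
  have := hd ((i * t⁻¹).val)
  rw [hi] at this
  rw [this]
  group
end

section
/- Let p be a prime, K a group, H = K ≀ ℤ/p, and x' ∈ K. Then the centralizer in H of the diagonal element diag(x') equals the wreath product of the centralizer: Z_H(diag(x')) = {((y_1,…,y_p),τ) : y_i ∈ Z_K(x') for all i, τ ∈ ℤ/p} = Z_K(x') ≀ ℤ/p. -/
/-- Let `p` be a prime, `K` a group, `H = K ≀ ℤ/p`, and `x' ∈ K`.  Then
the centralizer in `H` of the diagonal element `diag(x')` equals the wreath product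
`Z_K(x') ≀ ℤ/p = {((y_1,…,y_p),τ) : y_i ∈ Z_K(x') for all i, τ ∈ ℤ/p}`. -/
theorem centralizer_diag_eq_wreath
    (p : ℕ) (hp : p.Prime) (K : Type*) [Group K] (x' : K) :
    ∀ h : WreathP p K,
      h ∈ Subgroup.centralizer {(SemidirectProduct.inl (fun _ => x') : WreathP p K)} ↔
        ∀ i : ZMod p, h.left i ∈ Subgroup.centralizer {x'} := by
  intro h
  simp only [Subgroup.mem_centralizer_singleton_iff]
  constructor
  · intro hc i
    have := congrArg SemidirectProduct.left hc
    simp only [SemidirectProduct.mul_left, SemidirectProduct.left_inl,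
      SemidirectProduct.right_inl, map_one, MulAut.one_apply] at this
    have := congrFun this i
    simpa [cycShift] using this
  · intro hc
    ext
    · rw [SemidirectProduct.mul_left, SemidirectProduct.mul_left, SemidirectProduct.left_inl,
        SemidirectProduct.right_inl]
      simp [cycShift, hc]
    · rw [SemidirectProduct.mul_right, SemidirectProduct.mul_right]
      simp
end

section
/- Let p be a prime, K a group, and let A be an abelian subgroup of H = K ≀ ℤ/p whose image under the projection π : H → ℤ/p is nontrivial. Then there exist c ∈ K^p and an abelian subgroup B of K such that c A c⁻¹ is contained in the subgroup B ≀ ℤ/p = {((y_1,…,y_p),τ) : y_i ∈ B for all i, τ ∈ ℤ/p} of H. -/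
open SemidirectProduct in
/-- Let `p` be a prime, `K` a group, and let `A` be an abelian subgroup of
`H = K ≀ ℤ/p` whose image under the projection `π : H → ℤ/p` is nontrivial.  Then there
exist `c ∈ K^p` and an abelian subgroup `B` of `K` such that `c A c⁻¹` is contained in
the subgroup `B ≀ ℤ/p = {((y_1,…,y_p),τ) : y_i ∈ B for all i, τ ∈ ℤ/p}` of `H`. -/
theorem abelian_subgroup_conj_into_wreath
    (p : ℕ) (hp : p.Prime) (K : Type*) [Group K] (A : Subgroup (WreathP p K))
    (hA : ∀ x ∈ A, ∀ y ∈ A, x * y = y * x)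
    (hsur : ∃ g ∈ A, SemidirectProduct.rightHom g ≠ 1) :
    ∃ (c : ZMod p → K) (B : Subgroup K),
      (∀ x ∈ B, ∀ y ∈ B, x * y = y * x) ∧
      ∀ g ∈ A, ∀ i : ZMod p,
        (SemidirectProduct.inl c * g * (SemidirectProduct.inl c)⁻¹).left i ∈ B := by
  classical
  haveI : Fact p.Prime := ⟨hp⟩
  obtain ⟨g₀, hg₀A, hg₀⟩ := hsur
  set x : ZMod p → K := g₀.left with hxdef
  set τ : ZMod p := Multiplicative.toAdd g₀.right with hτdef
  have hg₀r : g₀.right ≠ 1 := by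
    rw [rightHom_eq_right] at hg₀; exact hg₀
  have hτ0 : τ ≠ 0 := by
    intro h
    apply hg₀r
    have : Multiplicative.toAdd g₀.right = Multiplicative.toAdd (1 : Multiplicative (ZMod p)) := by
      rw [← hτdef, h, toAdd_one]
    exact Multiplicative.toAdd.injective this
  have cast_id : ∀ a : ZMod p, ((a.val : ℕ) : ZMod p) = a := fun a =>
    ZMod.natCast_rightInverse a
  have shift_apply : ∀ (σ : Multiplicative (ZMod p)) (z : ZMod p → K) (i : ZMod p),
      (cycShift p K σ) z i = z (i - Multiplicative.toAdd σ) := fun _ _ _ => rfl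
  -- the recursive twisting function
  obtain ⟨d, hd⟩ : ∃ d : ℕ → K, ∀ k : ℕ, d (k + 1) = d k * x (-((k + 1 : ℕ) : ZMod p) * τ) :=
    ⟨fun k => Nat.rec 1 (fun k dk => dk * x (-((k + 1 : ℕ) : ZMod p) * τ)) k, fun _ => rfl⟩
  set c : ZMod p → K := fun i => d ((-i * τ⁻¹ - 1).val) with hcdef
  -- key cancellation property of c
  have Key : ∀ i : ZMod p, i ≠ 0 → c i * x i = c (i - τ) := by
    intro i hi
    set a : ZMod p := -i * τ⁻¹ with hadef
    have ha0 : a ≠ 0 := mul_ne_zero (neg_ne_zero.2 hi) (inv_ne_zero hτ0)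
    have hav : 1 ≤ a.val := Nat.one_le_iff_ne_zero.mpr (by
      simpa [ZMod.val_eq_zero] using ha0)
    have h1 : (-(i - τ) * τ⁻¹ - 1 : ZMod p) + 1 = a + 1 := by
      have : (-(i - τ) * τ⁻¹ : ZMod p) = a + τ * τ⁻¹ := by ring
      rw [mul_inv_cancel₀ hτ0] at this
      rw [this]; ring
    have h1' : (-(i - τ) * τ⁻¹ - 1 : ZMod p) = a := by
      have := add_right_cancel h1; exact this
    have h2 : (a - 1).val = a.val - 1 := by
      have hc1 : ((a.val - 1 : ℕ) : ZMod p) = a - 1 := by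
        rw [Nat.cast_sub hav, cast_id]; simp
      rw [← hc1, ZMod.val_cast_of_lt]
      have := ZMod.val_lt a
      omega
    have h3 : a.val - 1 + 1 = a.val := Nat.sub_add_cancel hav
    have h4 : d a.val = d (a.val - 1) * x (-((a.val : ℕ) : ZMod p) * τ) := by
      conv_lhs => rw [← h3]
      rw [hd (a.val - 1), h3]
    have h5 : (-((a.val : ℕ) : ZMod p) * τ) = i := by
      rw [cast_id, hadef]
      have : (-(-i * τ⁻¹) * τ : ZMod p) = i * (τ⁻¹ * τ) := by ring
      rw [this, inv_mul_cancel₀ hτ0, mul_one]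
    have hci : c i = d (a.val - 1) := by rw [hcdef]; simp only [← hadef, h2]
    have hci' : c (i - τ) = d a.val := by rw [hcdef]; simp only [h1']
    rw [hci, hci', h4, h5]
  -- conjugation
  set e : MulAut (WreathP p K) := MulAut.conj (inl c) with hedef
  have e_apply : ∀ g : WreathP p K, inl c * g * (inl c)⁻¹ = e g := fun g => rfl
  have conj_right : ∀ g : WreathP p K, (e g).right = g.right := by
    intro g
    rw [← e_apply]
    simp [mul_right, inv_right, right_inl]
  have conj_left : ∀ (g : WreathP p K) (i : ZMod p),
      (e g).left i = c i * g.left i * (c (i - Multiplicative.toAdd g.right))⁻¹ := by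
    intro g i
    rw [← e_apply]
    rw [mul_left, mul_left]
    simp only [left_inl, right_inl, inv_left, inv_right, right_inl, mul_right, one_mul,
      inv_inv, inv_one, map_one, MulAut.one_apply, Pi.mul_apply, shift_apply]
    simp [Pi.inv_apply]
  -- the conjugated distinguished element
  have hy : ∀ i : ZMod p, i ≠ 0 → (e g₀).left i = 1 := by
    intro i hi
    rw [conj_left, ← hτdef, ← hxdef, Key i hi, mul_inv_cancel]
  set w : K := (e g₀).left 0 with hwdef
  set S : Set K := insert w
    {u : K | ∃ g ∈ A, (e g).right = 1 ∧ (e g).left 0 = u} with hSdef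
  set B : Subgroup K := Subgroup.closure S with hBdef
  have hwB : w ∈ B := Subgroup.subset_closure (Set.mem_insert _ _)
  -- components of commutation with e g₀
  have hcomp : ∀ g ∈ A, (e g).right = 1 →
      ∀ i : ZMod p, (e g).left i * (e g₀).left i = (e g₀).left i * (e g).left (i - τ) := by
    intro g hg hr i
    have hcm : e g * e g₀ = e g₀ * e g := by
      rw [← map_mul, ← map_mul, hA g hg g₀ hg₀A]
    have h1 := congrArg (fun t : WreathP p K => t.left i) hcm
    simp only [mul_left, Pi.mul_apply, shift_apply, hr, toAdd_one, sub_zero,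
      conj_right, ← hτdef] at h1
    exact h1
  -- constancy lemma
  have L1 : ∀ g ∈ A, (e g).right = 1 →
      (∀ i : ZMod p, (e g).left i = (e g).left 0) ∧
      (e g).left 0 * w = w * (e g).left 0 := by
    intro g hg hr
    set z : ZMod p → K := (e g).left with hzdef
    have hshift : ∀ i : ZMod p, i ≠ 0 → z (i - τ) = z i := by
      intro i hi
      have := hcomp g hg hr i
      rw [hy i hi, mul_one, one_mul] at this
      exact this.symm
    have step : ∀ k : ℕ, 1 ≤ k → k < p →
        z (-((k + 1 : ℕ) : ZMod p) * τ) = z (-((k : ℕ) : ZMod p) * τ) := by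
      intro k h1 h2
      have hkne : ((k : ℕ) : ZMod p) ≠ 0 := by
        rw [Ne, ZMod.natCast_eq_zero_iff]
        intro hdvd
        exact absurd (Nat.le_of_dvd (by omega) hdvd) (by omega)
      have hne : -((k : ℕ) : ZMod p) * τ ≠ 0 := mul_ne_zero (neg_ne_zero.2 hkne) hτ0
      have := hshift _ hne
      have harith : -((k : ℕ) : ZMod p) * τ - τ = -((k + 1 : ℕ) : ZMod p) * τ := by
        push_cast; ring
      rw [harith] at this
      exact this
    have chain : ∀ k : ℕ, 1 ≤ k → k ≤ p →
        z (-((k : ℕ) : ZMod p) * τ) = z (-((1 : ℕ) : ZMod p) * τ) := by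
      intro k
      induction k with
      | zero => omega
      | succ n ih =>
        intro _ hk
        by_cases h : n = 0
        · subst h; norm_num
        · have hn1 : 1 ≤ n := by omega
          rw [step n hn1 (by omega)]
          exact ih hn1 (by omega)
    have hz0 : z 0 = z (-((1 : ℕ) : ZMod p) * τ) := by
      have := chain p hp.one_lt.le le_rfl
      rw [ZMod.natCast_self] at this
      simpa using this
    have const : ∀ i : ZMod p, z i = z 0 := by
      intro i
      by_cases hi : i = 0
      · rw [hi]
      · set k : ℕ := (-i * τ⁻¹).val with hkdef
        have hk0 : (-i * τ⁻¹ : ZMod p) ≠ 0 := mul_ne_zero (neg_ne_zero.2 hi) (inv_ne_zero hτ0)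
        have hk1 : 1 ≤ k := Nat.one_le_iff_ne_zero.mpr (by simpa [hkdef, ZMod.val_eq_zero] using hk0)
        have hk2 : k ≤ p := (ZMod.val_lt _).le
        have horbit : -((k : ℕ) : ZMod p) * τ = i := by
          rw [hkdef, cast_id]
          have : (-(-i * τ⁻¹) * τ : ZMod p) = i * (τ⁻¹ * τ) := by ring
          rw [this, inv_mul_cancel₀ hτ0, mul_one]
        rw [← horbit, chain k hk1 hk2, ← hz0]
    constructor
    · exact const
    · have := hcomp g hg hr 0
      rw [← hwdef, ← hzdef, zero_sub] at this
      have hzt : z (-τ) = z 0 := const (-τ)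
      rw [hzt] at this
      exact this
  -- powers of e g₀ have components in B
  have heright : Multiplicative.toAdd (e g₀).right = τ := by rw [conj_right]
  have hpow : ∀ (m : ℕ) (i : ZMod p), ((e g₀) ^ m).left i ∈ B := by
    intro m
    induction m with
    | zero => intro i; simp only [pow_zero, one_left, Pi.one_apply]; exact B.one_mem
    | succ n ih =>
      intro i
      rw [pow_succ', mul_left, Pi.mul_apply, shift_apply, heright]
      refine B.mul_mem ?_ (ih _)
      by_cases hi : i = 0
      · rw [hi, ← hwdef]; exact hwB
      · rw [hy i hi]; exact B.one_mem
  refine ⟨c, B, ?_, ?_⟩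
  · -- B is abelian
    have hS : ∀ a ∈ S, ∀ b ∈ S, a * b = b * a := by
      intro a ha b hb
      rcases ha with ha | ⟨g1, hg1, hr1, hu1⟩
      · rcases hb with hb | ⟨g2, hg2, hr2, hu2⟩
        · rw [ha, hb]
        · rw [ha, ← hu2]
          exact ((L1 g2 hg2 hr2).2).symm
      · rcases hb with hb | ⟨g2, hg2, hr2, hu2⟩
        · rw [hb, ← hu1]
          exact (L1 g1 hg1 hr1).2
        · rw [← hu1, ← hu2]
          have hcm : e g1 * e g2 = e g2 * e g1 := by
            rw [← map_mul, ← map_mul, hA g1 hg1 g2 hg2]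
          have h1 := congrArg (fun t : WreathP p K => t.left 0) hcm
          simp only [mul_left, Pi.mul_apply, shift_apply, hr1, hr2, toAdd_one, sub_zero] at h1
          exact h1
    intro a ha b hb
    induction ha, hb using Subgroup.closure_induction₂ with
    | mem u v hu hv => exact hS u hu v hv
    | one_left v hv => rw [one_mul, mul_one]
    | one_right u hu => rw [one_mul, mul_one]
    | mul_left u v t hu hv ht h1 h2 =>
      rw [mul_assoc, h2, ← mul_assoc, h1, mul_assoc]
    | mul_right v t u hv ht hu h1 h2 =>
      rw [← mul_assoc, h1, mul_assoc, h2, ← mul_assoc]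
    | inv_left u v hu hv h =>
      exact (Commute.inv_left h).eq
    | inv_right u v hu hv h =>
      exact (Commute.inv_right h).eq
  · -- the containment
    intro g hg i
    rw [e_apply]
    set σ : ZMod p := Multiplicative.toAdd g.right with hσdef
    set m : ℕ := (σ * τ⁻¹).val with hmdef
    have hrm : g₀.right ^ m = g.right := by
      apply Multiplicative.toAdd.injective
      rw [toAdd_pow, ← hτdef, ← hσdef, nsmul_eq_mul, hmdef, cast_id,
        mul_assoc, inv_mul_cancel₀ hτ0, mul_one]
    set g' : WreathP p K := g * (g₀ ^ m)⁻¹ with hg'def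
    have hg'A : g' ∈ A := A.mul_mem hg (A.inv_mem (A.pow_mem hg₀A m))
    have hg'r : (e g').right = 1 := by
      rw [conj_right, hg'def, mul_right, inv_right]
      have hq : ∀ n : ℕ, (g₀ ^ n).right = g₀.right ^ n := by
        intro n
        induction n with
        | zero => simp [pow_zero, one_right]
        | succ k ih => rw [pow_succ, pow_succ, mul_right, ih]
      rw [hq m, hrm, mul_inv_cancel]
    have hdecomp : e g = e g' * (e g₀) ^ m := by
      rw [← map_pow, ← map_mul]
      congr 1
      rw [hg'def, inv_mul_cancel_right]
    rw [hdecomp, mul_left, Pi.mul_apply, shift_apply, hg'r, toAdd_one, sub_zero]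
    refine B.mul_mem ?_ (hpow m i)
    have hc0 : (e g').left i = (e g').left 0 := (L1 g' hg'A hg'r).1 i
    rw [hc0]
    exact Subgroup.subset_closure (Set.mem_insert_iff.mpr (Or.inr ⟨g', hg'A, hg'r, rfl⟩))
end

section
/- Let G1 and G2 be finite isoclinic groups. Then there exist a natural number r, a group Ĝ, a central subgroup T of Ĝ isomorphic to (ℂˣ)^r (the r-fold direct product of the multiplicative group of nonzero complex numbers), and injective group homomorphisms φ1 : G1 → Ĝ and φ2 : G2 → Ĝ such that Ĝ = T·φ1(G1) = T·φ2(G2) and φ_k(G_k) ∩ T = φ_k(Z(G_k)) for k = 1, 2. In other words, G1 and G2 embed as subgroups of a common central extension of their common central quotient by an algebraic torus (they are toroidally related). -/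
noncomputable instance : RootableBy ℂˣ ℕ :=
  rootableByOfPowLeftSurj _ _ (fun {n} hn a => by
    obtain ⟨z, hz⟩ := IsAlgClosed.exists_pow_nat_eq (a : ℂ) (Nat.pos_of_ne_zero hn)
    have hz0 : z ≠ 0 := by
      intro h
      apply a.ne_zero
      rw [← hz, h, zero_pow hn]
    exact ⟨Units.mk0 z hz0, Units.ext (by simp [hz])⟩)

noncomputable instance : RootableBy ℂˣ ℤ := Group.rootableByIntOfRootableByNat ℂˣ

noncomputable instance additiveDivisible {A : Type*} [CommGroup A] [RootableBy A ℤ] :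
    DivisibleBy (Additive A) ℤ where
  div a n := Additive.ofMul (RootableBy.root a.toMul n)
  div_zero a := by
    simp [RootableBy.root_zero]
  div_cancel {n} a hn := by
    have := RootableBy.root_cancel (α := ℤ) a.toMul hn
    simpa using congrArg Additive.ofMul this

lemma exists_hom_extension {X C A : Type} [CommGroup X] [CommGroup C] [CommGroup A]
    [RootableBy A ℤ] (u : X →* C) (hu : Function.Injective u) (g : X →* A) :
    ∃ χ : C →* A, ∀ x, χ (u x) = g x := by
  have hinj : Module.Injective ℤ (Additive A) :=
    Module.Baer.injective (Module.Baer.of_divisible _)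
  obtain ⟨h, hh⟩ := hinj.out (MonoidHom.toAdditive u).toIntLinearMap hu
      (MonoidHom.toAdditive g).toIntLinearMap
  exact ⟨MonoidHom.toAdditive.symm h.toAddMonoidHom, fun x => hh x⟩

lemma exists_injective_hom_torus (Z : Type) [CommGroup Z] [Finite Z] :
    ∃ (r : ℕ) (f : Z →* (Fin r → ℂˣ)), Function.Injective f := by
  haveI : NeZero ((Monoid.exponent Z : ℕ) : ℂ) :=
    ⟨Nat.cast_ne_zero.mpr Monoid.exponent_ne_zero_of_finite⟩
  have hfin : Finite (Z →* ℂˣ) := by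
    obtain ⟨e⟩ := CommGroup.monoidHom_mulEquiv_of_hasEnoughRootsOfUnity Z ℂ
    exact Finite.of_equiv Z e.symm.toEquiv
  haveI := Fintype.ofFinite (Z →* ℂˣ)
  set r := Fintype.card (Z →* ℂˣ)
  let e : (Z →* ℂˣ) ≃ Fin r := Fintype.equivFin _
  refine ⟨r, { toFun := fun z k => (e.symm k) z,
               map_one' := by funext k; simp,
               map_mul' := fun a b => by funext k; simp }, ?_⟩
  rw [injective_iff_map_eq_one]
  intro z hz
  by_contra hz1
  obtain ⟨φ, hφ⟩ := CommGroup.exists_apply_ne_one_of_hasEnoughRootsOfUnity Z ℂ hz1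
  have := congrFun hz (e φ)
  simp at this
  exact hφ (by simpa using this)

noncomputable def finAppendMulEquiv (a b : ℕ) :
    ((Fin a → ℂˣ) × (Fin b → ℂˣ)) ≃* (Fin (a + b) → ℂˣ) where
  toFun x := Fin.append x.1 x.2
  invFun g := (fun k => g (Fin.castAdd b k), fun k => g (Fin.natAdd a k))
  left_inv x := by simp [Fin.append_left, Fin.append_right]
  right_inv g := by
    funext k
    induction k using Fin.addCases with
    | left k => simp [Fin.append_left]
    | right k => simp [Fin.append_right]
  map_mul' x y := by
    funext k
    induction k using Fin.addCases with
    | left k => simp [Fin.append_left]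
    | right k => simp [Fin.append_right]


open scoped commutatorElement

/-- A witness that `G₁` and `G₂` are *toroidally related*: both embed into a common
group `Ghat` which is a central extension by an algebraic torus `T ≅ (ℂˣ)^r`, in such a way
that `Ghat = T·G₁ = T·G₂` and `G_k ∩ T = Z(G_k)` for `k = 1, 2`. -/
structure ToroidalWitness (G₁ G₂ : Type*) [Group G₁] [Group G₂] where
  /-- the rank of the torus -/
  r : ℕ
  /-- the ambient group -/
  Ghat : Type
  [grp : Group Ghat]
  /-- the torus, a central subgroup of `Ghat` -/
  T : Subgroup Ghat
  T_central : T ≤ Subgroup.center Ghat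
  /-- the torus is isomorphic to `(ℂˣ)^r` -/
  T_torus : T ≃* (Fin r → ℂˣ)
  /-- the embedding of `G₁` -/
  φ₁ : G₁ →* Ghat
  φ₁_inj : Function.Injective φ₁
  /-- the embedding of `G₂` -/
  φ₂ : G₂ →* Ghat
  φ₂_inj : Function.Injective φ₂
  /-- `Ghat = T·φ₁(G₁)` -/
  cover₁ : ∀ g : Ghat, ∃ t ∈ T, ∃ g₁ : G₁, g = t * φ₁ g₁
  /-- `Ghat = T·φ₂(G₂)` -/
  cover₂ : ∀ g : Ghat, ∃ t ∈ T, ∃ g₂ : G₂, g = t * φ₂ g₂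
  /-- `φ₁(G₁) ∩ T = φ₁(Z(G₁))` -/
  inter₁ : Set.range φ₁ ∩ (T : Set Ghat) = φ₁ '' (Subgroup.center G₁ : Set G₁)
  /-- `φ₂(G₂) ∩ T = φ₂(Z(G₂))` -/
  inter₂ : Set.range φ₂ ∩ (T : Set Ghat) = φ₂ '' (Subgroup.center G₂ : Set G₂)

/-- finite isoclinic groups are toroidally related: they embed as
subgroups of a common central extension, by an algebraic torus `(ℂˣ)^r`, of their common
central quotient. -/
theorem isoclinic_implies_toroidally_related
    (G₁ G₂ : Type) [Group G₁] [Group G₂] [Finite G₁] [Finite G₂]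
    (h : IsIsoclinic G₁ G₂) :
    Nonempty (ToroidalWitness G₁ G₂) := by
  classical
  obtain ⟨i, j, hij⟩ := h
  -- the fibered product
  let P : Subgroup (G₁ × G₂) :=
    { carrier := {p | (QuotientGroup.mk p.2 : G₂ ⧸ Subgroup.center G₂) = i (QuotientGroup.mk p.1)}
      one_mem' := by simp
      mul_mem' := by
        intro p q hp hq
        simp only [Set.mem_setOf_eq] at *
        rw [Prod.fst_mul, Prod.snd_mul, QuotientGroup.mk_mul, QuotientGroup.mk_mul, map_mul,
          hp, hq]
      inv_mem' := by
        intro p hp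
        simp only [Set.mem_setOf_eq] at *
        rw [Prod.fst_inv, Prod.snd_inv, QuotientGroup.mk_inv, QuotientGroup.mk_inv, map_inv, hp] }
  have memP : ∀ p : G₁ × G₂, p ∈ P ↔
      (QuotientGroup.mk p.2 : G₂ ⧸ Subgroup.center G₂) = i (QuotientGroup.mk p.1) :=
    fun p => Iff.rfl
  let pr₁ : ↥P →* G₁ := (MonoidHom.fst G₁ G₂).comp P.subtype
  let pr₂ : ↥P →* G₂ := (MonoidHom.snd G₁ G₂).comp P.subtype
  have hpr₁s : Function.Surjective pr₁ := by
    intro x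
    obtain ⟨y, hy⟩ := QuotientGroup.mk_surjective (i (QuotientGroup.mk x))
    exact ⟨⟨(x, y), hy⟩, rfl⟩
  have hpr₂s : Function.Surjective pr₂ := by
    intro y
    obtain ⟨x, hx⟩ := QuotientGroup.mk_surjective (i.symm (QuotientGroup.mk y))
    refine ⟨⟨(x, y), ?_⟩, rfl⟩
    rw [memP]
    simp only
    rw [hx, MulEquiv.apply_symm_apply]
  -- embeddings of the centers into P
  let ζ₁ : ↥(Subgroup.center G₁) →* ↥P :=
    { toFun := fun z => ⟨((z : G₁), 1), by
        rw [memP]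
        simp only
        rw [(QuotientGroup.eq_one_iff _).mpr z.2, map_one, QuotientGroup.mk_one]⟩
      map_one' := rfl
      map_mul' := fun z w => Subtype.ext (by simp [Prod.ext_iff]) }
  let ζ₂ : ↥(Subgroup.center G₂) →* ↥P :=
    { toFun := fun z => ⟨(1, (z : G₂)), by
        rw [memP]
        simp only
        rw [(QuotientGroup.eq_one_iff _).mpr z.2, QuotientGroup.mk_one, map_one]⟩
      map_one' := rfl
      map_mul' := fun z w => Subtype.ext (by simp [Prod.ext_iff]) }
  -- the commutator subgroup of P is the graph of j
  let S : Subgroup ↥P :=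
    { carrier := {p | ∃ c : commutator G₁, (p : G₁ × G₂).1 = c ∧ (p : G₁ × G₂).2 = j c}
      one_mem' := ⟨1, by simp⟩
      mul_mem' := by
        rintro p q ⟨c, hc1, hc2⟩ ⟨d, hd1, hd2⟩
        exact ⟨c * d, by simp [hc1, hd1], by simp [hc2, hd2]⟩
      inv_mem' := by
        rintro p ⟨c, hc1, hc2⟩
        exact ⟨c⁻¹, by simp [hc1], by simp [hc2]⟩ }
  have hPcomm : commutator ↥P ≤ S := by
    apply Subgroup.commutator_le.mpr
    rintro ⟨⟨x, y⟩, hp⟩ - ⟨⟨x', y'⟩, hq⟩ -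
    refine ⟨⟨⁅x, x'⁆, Subgroup.commutator_mem_commutator (Subgroup.mem_top x)
        (Subgroup.mem_top x')⟩, ?_, ?_⟩
    · simp [commutatorElement_def]
    · have := hij x x' y y' hp hq
      simpa [commutatorElement_def] using this.symm
  -- abelianization of P
  let q : ↥P →* Abelianization ↥P := Abelianization.of
  have hkerq : ∀ p : ↥P, q p = 1 → p ∈ commutator ↥P := fun p hp =>
    (QuotientGroup.eq_one_iff p).mp hp
  have hu₁ : Function.Injective (q.comp ζ₁) := by
    rw [injective_iff_map_eq_one]
    intro z hz
    obtain ⟨c, hc1, hc2⟩ := hPcomm (hkerq _ hz)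
    have h2 : ((ζ₁ z : G₁ × G₂)).2 = (1 : G₂) := rfl
    have hjc : j c = 1 := Subtype.ext (by rw [← hc2, h2]; rfl)
    have hc : c = 1 := (MulEquiv.map_eq_one_iff j).mp hjc
    have h1 : ((ζ₁ z : G₁ × G₂)).1 = (z : G₁) := rfl
    exact Subtype.ext (by rw [← h1, hc1, hc]; rfl)
  have hu₂ : Function.Injective (q.comp ζ₂) := by
    rw [injective_iff_map_eq_one]
    intro z hz
    obtain ⟨c, hc1, hc2⟩ := hPcomm (hkerq _ hz)
    have h1 : ((ζ₂ z : G₁ × G₂)).1 = (1 : G₁) := rfl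
    have hc : c = 1 := Subtype.ext (by rw [← hc1, h1]; rfl)
    have h2 : ((ζ₂ z : G₁ × G₂)).2 = (z : G₂) := rfl
    exact Subtype.ext (by rw [← h2, hc2, hc, map_one]; rfl)
  -- tori for the centers
  letI : CommGroup ↥(Subgroup.center G₁) := { mul_comm := mul_comm' }
  letI : CommGroup ↥(Subgroup.center G₂) := { mul_comm := mul_comm' }
  obtain ⟨r₁, f₁, hf₁⟩ := exists_injective_hom_torus ↥(Subgroup.center G₁)
  obtain ⟨r₂, f₂, hf₂⟩ := exists_injective_hom_torus ↥(Subgroup.center G₂)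
  -- extensions of the characters to P (through the abelianization)
  obtain ⟨χ₁, hχ₁⟩ := exists_hom_extension (q.comp ζ₁) hu₁ f₁
  obtain ⟨χ₂, hχ₂⟩ := exists_hom_extension (q.comp ζ₂) hu₂ f₂
  -- the ambient group
  let T₀ := (Fin r₁ → ℂˣ) × (Fin r₂ → ℂˣ)
  let fc : ↥(Subgroup.center G₁) × ↥(Subgroup.center G₂) →* T₀ :=
    (f₁.comp (MonoidHom.fst _ _)).prod (f₂.comp (MonoidHom.snd _ _))
  let ι : ↥(Subgroup.center G₁) × ↥(Subgroup.center G₂) →* ↥P :=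
    { toFun := fun z => ⟨((z.1 : G₁), (z.2 : G₂)), by
        rw [memP]
        simp only
        rw [(QuotientGroup.eq_one_iff _).mpr z.1.2, (QuotientGroup.eq_one_iff _).mpr z.2.2,
          map_one]⟩
      map_one' := rfl
      map_mul' := fun z w => rfl }
  let μ : ↥(Subgroup.center G₁) × ↥(Subgroup.center G₂) →* T₀ × ↥P := (fc⁻¹).prod ι
  let N : Subgroup (T₀ × ↥P) := μ.range
  have hN : N ≤ Subgroup.center (T₀ × ↥P) := by
    rintro w ⟨z, rfl⟩
    rw [Subgroup.mem_center_iff]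
    intro g
    refine Prod.ext (mul_comm _ _) (Subtype.ext (Prod.ext ?_ ?_))
    · exact Subgroup.mem_center_iff.mp z.1.2 _
    · exact Subgroup.mem_center_iff.mp z.2.2 _
  haveI hNnormal : N.Normal := by
    refine ⟨fun n hn g => ?_⟩
    have hc := Subgroup.mem_center_iff.mp (hN hn) g
    rw [hc, mul_inv_cancel_right]
    exact hn
  let π : T₀ × ↥P →* (T₀ × ↥P) ⧸ N := QuotientGroup.mk' N
  have hπ : ∀ w, π w = 1 ↔ w ∈ N := by
    intro w
    exact QuotientGroup.eq_one_iff w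
  let α : T₀ →* (T₀ × ↥P) ⧸ N := π.comp (MonoidHom.inl T₀ ↥P)
  have hα : Function.Injective α := by
    rw [injective_iff_map_eq_one]
    intro t ht
    obtain ⟨z, hz⟩ := (hπ _).mp ht
    have h2 : ι z = 1 := congrArg Prod.snd hz
    have hz11 : (z.1 : G₁) = 1 := congrArg (fun p : ↥P => (p : G₁ × G₂).1) h2
    have hz22 : (z.2 : G₂) = 1 := congrArg (fun p : ↥P => (p : G₁ × G₂).2) h2
    have hz1 : z = 1 := Prod.ext (Subtype.ext hz11) (Subtype.ext hz22)
    have h1 := congrArg Prod.fst hz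
    rw [hz1, map_one] at h1
    exact h1.symm
  have hTc : α.range ≤ Subgroup.center ((T₀ × ↥P) ⧸ N) := by
    rintro g ⟨t, rfl⟩
    rw [Subgroup.mem_center_iff]
    intro g'
    obtain ⟨w, rfl⟩ := QuotientGroup.mk'_surjective N g'
    show π w * π (t, 1) = π (t, 1) * π w
    rw [← map_mul, ← map_mul]
    exact congrArg π (Prod.ext (by simp [mul_comm]) (by simp))
  -- the twisted embeddings of P
  let ψ₁ : ↥P →* T₀ := (1 : ↥P →* (Fin r₁ → ℂˣ)).prod (χ₂.comp q)
  let ψ₂ : ↥P →* T₀ := (χ₁.comp q).prod (1 : ↥P →* (Fin r₂ → ℂˣ))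
  let Ψ₁ : ↥P →* (T₀ × ↥P) ⧸ N := π.comp ((ψ₁⁻¹).prod (MonoidHom.id ↥P))
  let Ψ₂ : ↥P →* (T₀ × ↥P) ⧸ N := π.comp ((ψ₂⁻¹).prod (MonoidHom.id ↥P))
  -- kernels of the projections
  have hker₁mem : ∀ p : ↥P, pr₁ p = 1 → ∃ z₂ : ↥(Subgroup.center G₂), p = ζ₂ z₂ := by
    intro p hp
    have hmem := (memP _).mp p.2
    have h1 : (p : G₁ × G₂).1 = 1 := hp
    rw [h1, QuotientGroup.mk_one, map_one] at hmem
    have hz : (p : G₁ × G₂).2 ∈ Subgroup.center G₂ := by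
      rw [← QuotientGroup.eq_one_iff]
      exact hmem
    exact ⟨⟨_, hz⟩, Subtype.ext (Prod.ext h1 rfl)⟩
  have hker₂mem : ∀ p : ↥P, pr₂ p = 1 → ∃ z₁ : ↥(Subgroup.center G₁), p = ζ₁ z₁ := by
    intro p hp
    have hmem := (memP _).mp p.2
    have h2 : (p : G₁ × G₂).2 = 1 := hp
    rw [h2, QuotientGroup.mk_one] at hmem
    have hz : (p : G₁ × G₂).1 ∈ Subgroup.center G₁ := by
      rw [← QuotientGroup.eq_one_iff]
      exact (MulEquiv.map_eq_one_iff i).mp hmem.symm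
    exact ⟨⟨_, hz⟩, Subtype.ext (Prod.ext rfl h2)⟩
  have hΨ₁ker : ∀ p : ↥P, pr₁ p = 1 → Ψ₁ p = 1 := by
    intro p hp
    obtain ⟨z₂, rfl⟩ := hker₁mem p hp
    show π ((ψ₁ (ζ₂ z₂))⁻¹, ζ₂ z₂) = 1
    rw [hπ]
    refine ⟨(1, z₂), Prod.ext ?_ ?_⟩
    · show (fc (1, z₂))⁻¹ = (ψ₁ (ζ₂ z₂))⁻¹
      congr 1
      exact Prod.ext (map_one f₁) (hχ₂ z₂).symm
    · exact Subtype.ext (Prod.ext rfl rfl)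
  have hΨ₂ker : ∀ p : ↥P, pr₂ p = 1 → Ψ₂ p = 1 := by
    intro p hp
    obtain ⟨z₁, rfl⟩ := hker₂mem p hp
    show π ((ψ₂ (ζ₁ z₁))⁻¹, ζ₁ z₁) = 1
    rw [hπ]
    refine ⟨(z₁, 1), Prod.ext ?_ ?_⟩
    · show (fc (z₁, 1))⁻¹ = (ψ₂ (ζ₁ z₁))⁻¹
      congr 1
      exact Prod.ext (hχ₁ z₁).symm (map_one f₂)
    · exact Subtype.ext (Prod.ext rfl rfl)
  -- the embeddings
  let e₁ : (↥P ⧸ pr₁.ker) ≃* G₁ := QuotientGroup.quotientKerEquivOfSurjective pr₁ hpr₁s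
  let e₂ : (↥P ⧸ pr₂.ker) ≃* G₂ := QuotientGroup.quotientKerEquivOfSurjective pr₂ hpr₂s
  let φ₁ : G₁ →* (T₀ × ↥P) ⧸ N :=
    (QuotientGroup.lift pr₁.ker Ψ₁ (fun p hp => hΨ₁ker p hp)).comp e₁.symm.toMonoidHom
  let φ₂ : G₂ →* (T₀ × ↥P) ⧸ N :=
    (QuotientGroup.lift pr₂.ker Ψ₂ (fun p hp => hΨ₂ker p hp)).comp e₂.symm.toMonoidHom
  have hφ₁ : ∀ p : ↥P, φ₁ (pr₁ p) = Ψ₁ p := by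
    intro p
    have hh : e₁.symm (pr₁ p) = QuotientGroup.mk p := by
      apply e₁.injective
      rw [MulEquiv.apply_symm_apply]
      rfl
    show (QuotientGroup.lift pr₁.ker Ψ₁ (fun p hp => hΨ₁ker p hp)) (e₁.symm (pr₁ p)) = Ψ₁ p
    rw [hh]
    rfl
  have hφ₂ : ∀ p : ↥P, φ₂ (pr₂ p) = Ψ₂ p := by
    intro p
    have hh : e₂.symm (pr₂ p) = QuotientGroup.mk p := by
      apply e₂.injective
      rw [MulEquiv.apply_symm_apply]
      rfl
    show (QuotientGroup.lift pr₂.ker Ψ₂ (fun p hp => hΨ₂ker p hp)) (e₂.symm (pr₂ p)) = Ψ₂ p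
    rw [hh]
    rfl
  -- injectivity of the embeddings
  have hφ₁inj : Function.Injective φ₁ := by
    rw [injective_iff_map_eq_one]
    intro x hx
    obtain ⟨p, rfl⟩ := hpr₁s x
    rw [hφ₁] at hx
    obtain ⟨z, hz⟩ := (hπ _).mp hx
    have h1' : fc z = ψ₁ p := inv_injective (congrArg Prod.fst hz)
    have h2 : f₁ z.1 = 1 := congrArg Prod.fst h1'
    have hz1 : z.1 = 1 := hf₁ (by rw [h2, map_one])
    have hp : p = ι z := (congrArg Prod.snd hz).symm
    show pr₁ p = 1
    rw [hp]
    show (z.1 : G₁) = 1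
    rw [hz1]
    rfl
  have hφ₂inj : Function.Injective φ₂ := by
    rw [injective_iff_map_eq_one]
    intro x hx
    obtain ⟨p, rfl⟩ := hpr₂s x
    rw [hφ₂] at hx
    obtain ⟨z, hz⟩ := (hπ _).mp hx
    have h1' : fc z = ψ₂ p := inv_injective (congrArg Prod.fst hz)
    have h2 : f₂ z.2 = 1 := congrArg Prod.snd h1'
    have hz2 : z.2 = 1 := hf₂ (by rw [h2, map_one])
    have hp : p = ι z := (congrArg Prod.snd hz).symm
    show pr₂ p = 1
    rw [hp]
    show (z.2 : G₂) = 1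
    rw [hz2]
    rfl
  -- covering
  have hcov₁ : ∀ g : (T₀ × ↥P) ⧸ N, ∃ t ∈ α.range, ∃ g₁ : G₁, g = t * φ₁ g₁ := by
    intro g
    obtain ⟨w, rfl⟩ := QuotientGroup.mk'_surjective N g
    refine ⟨α (w.1 * ψ₁ w.2), ⟨_, rfl⟩, pr₁ w.2, ?_⟩
    rw [hφ₁]
    show π w = π (w.1 * ψ₁ w.2, 1) * π ((ψ₁ w.2)⁻¹, w.2)
    rw [← map_mul]
    exact congrArg π (Prod.ext (by simp) (by simp))
  have hcov₂ : ∀ g : (T₀ × ↥P) ⧸ N, ∃ t ∈ α.range, ∃ g₂ : G₂, g = t * φ₂ g₂ := by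
    intro g
    obtain ⟨w, rfl⟩ := QuotientGroup.mk'_surjective N g
    refine ⟨α (w.1 * ψ₂ w.2), ⟨_, rfl⟩, pr₂ w.2, ?_⟩
    rw [hφ₂]
    show π w = π (w.1 * ψ₂ w.2, 1) * π ((ψ₂ w.2)⁻¹, w.2)
    rw [← map_mul]
    exact congrArg π (Prod.ext (by simp) (by simp))
  -- intersections
  have hint₁ : Set.range φ₁ ∩ (α.range : Set ((T₀ × ↥P) ⧸ N)) =
      φ₁ '' (Subgroup.center G₁ : Set G₁) := by
    apply Set.Subset.antisymm
    · rintro g ⟨⟨x, rfl⟩, htT⟩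
      obtain ⟨t, ht⟩ := htT
      obtain ⟨p, rfl⟩ := hpr₁s x
      rw [hφ₁] at ht
      have hmem : ((t, (1 : ↥P))⁻¹ * ((ψ₁ p)⁻¹, p)) ∈ N := by
        rw [← hπ, map_mul, map_inv]
        have hππ : π (t, 1) = π ((ψ₁ p)⁻¹, p) := ht
        rw [hππ, inv_mul_cancel]
      obtain ⟨z, hz⟩ := hmem
      have hp2 : p = ι z := by
        have h2 := congrArg Prod.snd hz
        have h3 : p = (μ z).2 := by simpa using h2.symm
        exact h3
      refine ⟨(z.1 : G₁), z.1.2, ?_⟩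
      congr 1
      rw [hp2]
      rfl
    · rintro g ⟨x, hx, rfl⟩
      refine ⟨⟨x, rfl⟩, ?_⟩
      rw [SetLike.mem_coe, MonoidHom.mem_range]
      have hx' : pr₁ (ζ₁ ⟨x, hx⟩) = x := rfl
      rw [← hx', hφ₁]
      refine ⟨fc (⟨x, hx⟩, 1) * (ψ₁ (ζ₁ ⟨x, hx⟩))⁻¹, ?_⟩
      have hmem : ((fc (⟨x, hx⟩, 1) * (ψ₁ (ζ₁ ⟨x, hx⟩))⁻¹, (1 : ↥P)) : T₀ × ↥P) *
          μ (⟨x, hx⟩, 1) = ((ψ₁ (ζ₁ ⟨x, hx⟩))⁻¹, ζ₁ ⟨x, hx⟩) := by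
        refine Prod.ext ?_ ?_
        · show fc (⟨x, hx⟩, 1) * (ψ₁ (ζ₁ ⟨x, hx⟩))⁻¹ * (fc (⟨x, hx⟩, 1))⁻¹ =
            (ψ₁ (ζ₁ ⟨x, hx⟩))⁻¹
          rw [mul_comm (fc (⟨x, hx⟩, 1)) _, mul_inv_cancel_right]
        · show 1 * ι (⟨x, hx⟩, 1) = ζ₁ ⟨x, hx⟩
          rw [one_mul]
          exact Subtype.ext (Prod.ext rfl rfl)
      show π (fc (⟨x, hx⟩, 1) * (ψ₁ (ζ₁ ⟨x, hx⟩))⁻¹, 1) = π ((ψ₁ (ζ₁ ⟨x, hx⟩))⁻¹, ζ₁ ⟨x, hx⟩)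
      rw [← hmem, map_mul, (hπ _).mpr ⟨(⟨x, hx⟩, 1), rfl⟩, mul_one]
  have hint₂ : Set.range φ₂ ∩ (α.range : Set ((T₀ × ↥P) ⧸ N)) =
      φ₂ '' (Subgroup.center G₂ : Set G₂) := by
    apply Set.Subset.antisymm
    · rintro g ⟨⟨x, rfl⟩, htT⟩
      obtain ⟨t, ht⟩ := htT
      obtain ⟨p, rfl⟩ := hpr₂s x
      rw [hφ₂] at ht
      have hmem : ((t, (1 : ↥P))⁻¹ * ((ψ₂ p)⁻¹, p)) ∈ N := by
        rw [← hπ, map_mul, map_inv]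
        have hππ : π (t, 1) = π ((ψ₂ p)⁻¹, p) := ht
        rw [hππ, inv_mul_cancel]
      obtain ⟨z, hz⟩ := hmem
      have hp2 : p = ι z := by
        have h2 := congrArg Prod.snd hz
        have h3 : p = (μ z).2 := by simpa using h2.symm
        exact h3
      refine ⟨(z.2 : G₂), z.2.2, ?_⟩
      congr 1
      rw [hp2]
      rfl
    · rintro g ⟨x, hx, rfl⟩
      refine ⟨⟨x, rfl⟩, ?_⟩
      rw [SetLike.mem_coe, MonoidHom.mem_range]
      have hx' : pr₂ (ζ₂ ⟨x, hx⟩) = x := rfl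
      rw [← hx', hφ₂]
      refine ⟨fc (1, ⟨x, hx⟩) * (ψ₂ (ζ₂ ⟨x, hx⟩))⁻¹, ?_⟩
      have hmem : ((fc (1, ⟨x, hx⟩) * (ψ₂ (ζ₂ ⟨x, hx⟩))⁻¹, (1 : ↥P)) : T₀ × ↥P) *
          μ (1, ⟨x, hx⟩) = ((ψ₂ (ζ₂ ⟨x, hx⟩))⁻¹, ζ₂ ⟨x, hx⟩) := by
        refine Prod.ext ?_ ?_
        · show fc (1, ⟨x, hx⟩) * (ψ₂ (ζ₂ ⟨x, hx⟩))⁻¹ * (fc (1, ⟨x, hx⟩))⁻¹ =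
            (ψ₂ (ζ₂ ⟨x, hx⟩))⁻¹
          rw [mul_comm (fc (1, ⟨x, hx⟩)) _, mul_inv_cancel_right]
        · show 1 * ι (1, ⟨x, hx⟩) = ζ₂ ⟨x, hx⟩
          rw [one_mul]
          exact Subtype.ext (Prod.ext rfl rfl)
      show π (fc (1, ⟨x, hx⟩) * (ψ₂ (ζ₂ ⟨x, hx⟩))⁻¹, 1) = π ((ψ₂ (ζ₂ ⟨x, hx⟩))⁻¹, ζ₂ ⟨x, hx⟩)
      rw [← hmem, map_mul, (hπ _).mpr ⟨(1, ⟨x, hx⟩), rfl⟩, mul_one]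
  exact ⟨{ r := r₁ + r₂
           Ghat := (T₀ × ↥P) ⧸ N
           T := α.range
           T_central := hTc
           T_torus := (MonoidHom.ofInjective hα).symm.trans (finAppendMulEquiv r₁ r₂)
           φ₁ := φ₁
           φ₁_inj := hφ₁inj
           φ₂ := φ₂
           φ₂_inj := hφ₂inj
           cover₁ := hcov₁
           cover₂ := hcov₂
           inter₁ := hint₁
           inter₂ := hint₂ }⟩
end

section
/- Let Ĝ be a group and let H1 and H2 be subgroups of Ĝ such that Ĝ = Z(Ĝ)·H1 = Z(Ĝ)·H2, i.e. every element of Ĝ is a product of a central element of Ĝ and an element of H_k, for k = 1, 2. Then H1 and H2 are isoclinic. (In particular, if two groups are toroidally related—both embed into a common group Ĝ as subgroups H1, H2 with a central subgroup T ≤ Z(Ĝ) satisfying Ĝ = T·H1 = T·H2—then they are isoclinic.) -/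
open scoped commutatorElement

section helpers

variable {G : Type*} [Group G]

lemma comm_central_left {z : G} (hz : z ∈ Subgroup.center G) (a b : G) :
    ⁅z * a, b⁆ = ⁅a, b⁆ := by
  have h : z * (a * b * a⁻¹) = (a * b * a⁻¹) * z :=
    ((Subgroup.mem_center_iff.mp hz) _).symm
  have h2 : ⁅z * a, b⁆ = z * (a * b * a⁻¹) * z⁻¹ * b⁻¹ := by
    rw [commutatorElement_def]; group
  rw [h2, h]
  rw [commutatorElement_def]; group

lemma comm_central_right {z : G} (hz : z ∈ Subgroup.center G) (a b : G) :
    ⁅a, z * b⁆ = ⁅a, b⁆ := by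
  have := congrArg (·⁻¹) (comm_central_left hz b a)
  simpa [commutatorElement_inv] using this

variable (H : Subgroup G)

/-- The natural map `H →* G ⧸ Z(G)`. -/
def covψ : H →* G ⧸ Subgroup.center G :=
  (QuotientGroup.mk' (Subgroup.center G)).comp H.subtype

variable {H}

lemma covψ_surjective (hcov : ∀ g : G, ∃ z ∈ Subgroup.center G, ∃ h ∈ H, g = z * h) :
    Function.Surjective (covψ H) := by
  intro q
  obtain ⟨g, rfl⟩ := QuotientGroup.mk_surjective q
  obtain ⟨z, hz, h, hh, rfl⟩ := hcov g
  refine ⟨⟨h, hh⟩, ?_⟩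
  show QuotientGroup.mk h = QuotientGroup.mk (z * h)
  rw [QuotientGroup.eq]
  have : h⁻¹ * (z * h) = z := by
    rw [← (Subgroup.mem_center_iff.mp hz h)]
    group
  rw [this]; exact hz

lemma covψ_ker (hcov : ∀ g : G, ∃ z ∈ Subgroup.center G, ∃ h ∈ H, g = z * h) :
    (covψ H).ker = Subgroup.center H := by
  ext ⟨h, hh⟩
  have hker : (⟨h, hh⟩ : H) ∈ (covψ H).ker ↔ h ∈ Subgroup.center G := by
    simp [covψ, MonoidHom.mem_ker, QuotientGroup.eq_one_iff]
  rw [hker]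
  constructor
  · intro hc
    refine Subgroup.mem_center_iff.mpr fun ⟨k, hk⟩ => ?_
    exact Subtype.ext (Subgroup.mem_center_iff.mp hc k)
  · intro hc
    refine Subgroup.mem_center_iff.mpr fun g => ?_
    obtain ⟨z, hz, k, hk, rfl⟩ := hcov g
    have h1 : k * h = h * k :=
      congrArg Subtype.val (Subgroup.mem_center_iff.mp hc ⟨k, hk⟩)
    have h2 : h * z = z * h := Subgroup.mem_center_iff.mp hz h
    calc z * k * h = z * (h * k) := by rw [mul_assoc, h1]
    _ = h * (z * k) := by rw [← mul_assoc, ← h2, mul_assoc]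

/-- The quotient `H ⧸ Z(H)` is isomorphic to `G ⧸ Z(G)`. -/
noncomputable def covQuotEquiv (hcov : ∀ g : G, ∃ z ∈ Subgroup.center G, ∃ h ∈ H, g = z * h) :
    (H ⧸ Subgroup.center H) ≃* (G ⧸ Subgroup.center G) :=
  (QuotientGroup.quotientMulEquivOfEq (covψ_ker hcov).symm).trans
    (QuotientGroup.quotientKerEquivOfSurjective (covψ H) (covψ_surjective hcov))

lemma covQuotEquiv_mk (hcov : ∀ g : G, ∃ z ∈ Subgroup.center G, ∃ h ∈ H, g = z * h) (x : H) :
    covQuotEquiv hcov (QuotientGroup.mk x) = QuotientGroup.mk (x : G) := rfl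

lemma cov_map_commutator (hcov : ∀ g : G, ∃ z ∈ Subgroup.center G, ∃ h ∈ H, g = z * h) :
    (commutator H).map H.subtype = commutator G := by
  rw [commutator_def, commutator_def, Subgroup.map_commutator,
    ← MonoidHom.range_eq_map, Subgroup.range_subtype]
  apply le_antisymm
  · exact Subgroup.commutator_mono le_top le_top
  · rw [Subgroup.commutator_le]
    intro g hg g' hg'
    obtain ⟨z, hz, k, hk, rfl⟩ := hcov g
    obtain ⟨z', hz', k', hk', rfl⟩ := hcov g'
    rw [comm_central_left hz, comm_central_right hz']
    exact Subgroup.commutator_mem_commutator hk hk'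

/-- `[H,H] ≃ [G,G]`. -/
noncomputable def covCommEquiv (hcov : ∀ g : G, ∃ z ∈ Subgroup.center G, ∃ h ∈ H, g = z * h) :
    commutator H ≃* commutator G :=
  ((commutator H).equivMapOfInjective H.subtype H.subtype_injective).trans
    (MulEquiv.subgroupCongr (cov_map_commutator hcov))

lemma covCommEquiv_coe (hcov : ∀ g : G, ∃ z ∈ Subgroup.center G, ∃ h ∈ H, g = z * h)
    (c : commutator H) : ((covCommEquiv hcov c : commutator G) : G) = ((c : H) : G) := rfl

end helpers

/-- Let `Ĝ` be a group and `H₁`, `H₂` subgroups of `Ĝ` such that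
`Ĝ = Z(Ĝ)·H₁ = Z(Ĝ)·H₂`, i.e. every element of `Ĝ` is the product of a central element
and an element of `H_k`, for `k = 1, 2`.  Then `H₁` and `H₂` are isoclinic.  (In
particular, toroidally related groups are isoclinic.) -/
theorem isoclinic_of_central_covers
    (Ghat : Type*) [Group Ghat] (H₁ H₂ : Subgroup Ghat)
    (h₁ : ∀ g : Ghat, ∃ z ∈ Subgroup.center Ghat, ∃ h ∈ H₁, g = z * h)
    (h₂ : ∀ g : Ghat, ∃ z ∈ Subgroup.center Ghat, ∃ h ∈ H₂, g = z * h) :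
    IsIsoclinic ↥H₁ ↥H₂ := by
  refine ⟨(covQuotEquiv h₁).trans (covQuotEquiv h₂).symm,
          (covCommEquiv h₁).trans (covCommEquiv h₂).symm, ?_⟩
  intro x y x' y' hx hy
  have hx' : ((x' : Ghat))⁻¹ * (x : Ghat) ∈ Subgroup.center Ghat := by
    have : covQuotEquiv h₂ (QuotientGroup.mk x') = covQuotEquiv h₁ (QuotientGroup.mk x) := by
      rw [hx, MulEquiv.trans_apply, MulEquiv.apply_symm_apply]
    rw [covQuotEquiv_mk, covQuotEquiv_mk, QuotientGroup.eq] at this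
    exact this
  have hy' : ((y' : Ghat))⁻¹ * (y : Ghat) ∈ Subgroup.center Ghat := by
    have : covQuotEquiv h₂ (QuotientGroup.mk y') = covQuotEquiv h₁ (QuotientGroup.mk y) := by
      rw [hy, MulEquiv.trans_apply, MulEquiv.apply_symm_apply]
    rw [covQuotEquiv_mk, covQuotEquiv_mk, QuotientGroup.eq] at this
    exact this
  have hxd : (x : Ghat) = ((x' : Ghat)⁻¹ * x) * x' := by
    rw [← Subgroup.mem_center_iff.mp hx' (x' : Ghat)]; group
  have hyd : (y : Ghat) = ((y' : Ghat)⁻¹ * y) * y' := by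
    rw [← Subgroup.mem_center_iff.mp hy' (y' : Ghat)]; group
  have hcomm : ⁅(x : Ghat), (y : Ghat)⁆ = ⁅(x' : Ghat), (y' : Ghat)⁆ := by
    conv_lhs => rw [hxd, hyd]
    rw [comm_central_left hx', comm_central_right hy']
  set c : commutator ↥H₁ := ⟨⁅x, y⁆, Subgroup.commutator_mem_commutator (Subgroup.mem_top x)
          (Subgroup.mem_top y)⟩ with hc
  have key : ((((covCommEquiv h₂).symm ((covCommEquiv h₁) c) : ↥H₂)) : Ghat)
      = ((c : ↥H₁) : Ghat) := by
    rw [← covCommEquiv_coe h₂ ((covCommEquiv h₂).symm ((covCommEquiv h₁) c)),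
      MulEquiv.apply_symm_apply, covCommEquiv_coe h₁]
  apply Subtype.ext
  show ((((covCommEquiv h₂).symm ((covCommEquiv h₁) c) : ↥H₂)) : Ghat)
      = ((⁅x', y'⁆ : ↥H₂) : Ghat)
  rw [key]
  have h1 : ((c : ↥H₁) : Ghat) = ⁅(x : Ghat), (y : Ghat)⁆ := rfl
  have h2 : ((⁅x', y'⁆ : ↥H₂) : Ghat) = ⁅(x' : Ghat), (y' : Ghat)⁆ := rfl
  rw [h1, h2, hcomm]
end

section
/- Let (i,j) be an isoclinism between groups G1 (with center Z1) and G2 (with center Z2), and let G12 = {(g1, g2) ∈ G1 × G2 : i(g1 Z1) = g2 Z2} be the fiber product. Then the commutator subgroup of G12 is the graph of j on commutators: [G12, G12] = {(c, j(c)) : c ∈ [G1, G1]}. -/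
/-- The fiber product `G₁₂ = {(g₁,g₂) : i(g₁Z₁) = g₂Z₂}` associated to an isomorphism
`i : G₁/Z(G₁) ≃ G₂/Z(G₂)`. -/
def fiberProduct {G₁ G₂ : Type*} [Group G₁] [Group G₂]
    (i : (G₁ ⧸ Subgroup.center G₁) ≃* (G₂ ⧸ Subgroup.center G₂)) :
    Subgroup (G₁ × G₂) where
  carrier := {g | i (QuotientGroup.mk g.1) = QuotientGroup.mk g.2}
  one_mem' := by simp
  mul_mem' := by
    intro a b ha hb
    simp only [Set.mem_setOf_eq] at *
    rw [Prod.fst_mul, Prod.snd_mul, QuotientGroup.mk_mul, QuotientGroup.mk_mul,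
      map_mul, ha, hb]
  inv_mem' := by
    intro a ha
    simp only [Set.mem_setOf_eq] at *
    rw [Prod.fst_inv, Prod.snd_inv, QuotientGroup.mk_inv, QuotientGroup.mk_inv,
      map_inv, ha]

open scoped commutatorElement

/-- Let `(i,j)` be an isoclinism between groups `G₁` (with center `Z₁`)
and `G₂` (with center `Z₂`), and let `G₁₂ = {(g₁,g₂) ∈ G₁ × G₂ : i(g₁Z₁) = g₂Z₂}` be the
fiber product.  Then the commutator subgroup of `G₁₂` is the graph of `j` on
commutators: `[G₁₂,G₁₂] = {(c, j(c)) : c ∈ [G₁,G₁]}`. -/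
theorem commutator_fiberProduct_eq_graph
    (G₁ G₂ : Type*) [Group G₁] [Group G₂]
    (i : (G₁ ⧸ Subgroup.center G₁) ≃* (G₂ ⧸ Subgroup.center G₂))
    (j : commutator G₁ ≃* commutator G₂)
    (hij : ∀ (x y : G₁) (x' y' : G₂),
      (QuotientGroup.mk x' : G₂ ⧸ Subgroup.center G₂) = i (QuotientGroup.mk x) →
      (QuotientGroup.mk y' : G₂ ⧸ Subgroup.center G₂) = i (QuotientGroup.mk y) →
      (j ⟨⁅x, y⁆, Subgroup.commutator_mem_commutator (Subgroup.mem_top x)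
          (Subgroup.mem_top y)⟩ : G₂) = ⁅x', y'⁆) :
    ∀ g : G₁ × G₂, g ∈ ⁅fiberProduct i, fiberProduct i⁆ ↔
      ∃ c : commutator G₁, g = ((c : G₁), (j c : G₂)) := by
  intro g
  set F := fiberProduct i with hF
  constructor
  · -- forward direction
    intro hg
    have hle : ⁅F, F⁆ ≤ MonoidHom.range
        (((commutator G₁).subtype).prod (((commutator G₂).subtype).comp j.toMonoidHom)) := by
      rw [Subgroup.commutator_le]
      intro p hp q hq
      have hp' : i (QuotientGroup.mk p.1) = QuotientGroup.mk p.2 := hp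
      have hq' : i (QuotientGroup.mk q.1) = QuotientGroup.mk q.2 := hq
      refine ⟨⟨⁅p.1, q.1⁆, Subgroup.commutator_mem_commutator (Subgroup.mem_top p.1)
          (Subgroup.mem_top q.1)⟩, ?_⟩
      have := hij p.1 q.1 p.2 q.2 hp'.symm hq'.symm
      ext
      · rfl
      · exact this
    obtain ⟨c, hc⟩ := hle hg
    exact ⟨c, hc.symm⟩
  · rintro ⟨c, rfl⟩
    have key : ∀ x (h : x ∈ Subgroup.closure (commutatorSet G₁)),
        ((x, (j ⟨x, (commutator_eq_closure G₁) ▸ h⟩ : G₂)) : G₁ × G₂) ∈ ⁅F, F⁆ := by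
      intro x h
      induction h using Subgroup.closure_induction with
      | mem a ha =>
        obtain ⟨u, v, huv⟩ := ha
        obtain ⟨u', hu'⟩ := QuotientGroup.mk_surjective (i (QuotientGroup.mk u))
        obtain ⟨v', hv'⟩ := QuotientGroup.mk_surjective (i (QuotientGroup.mk v))
        have hmemu : ((u, u') : G₁ × G₂) ∈ F := hu'.symm
        have hmemv : ((v, v') : G₁ × G₂) ∈ F := hv'.symm
        have hcom : ⁅((u, u') : G₁ × G₂), (v, v')⁆ ∈ ⁅F, F⁆ :=
          Subgroup.commutator_mem_commutator hmemu hmemv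
        have hj := hij u v u' v' hu' hv'
        have heq : ((a, (j ⟨a, (commutator_eq_closure G₁) ▸ Subgroup.subset_closure
            ⟨u, v, huv⟩⟩ : G₂)) : G₁ × G₂) = ⁅((u, u') : G₁ × G₂), (v, v')⁆ := by
          have ha' : a = ⁅u, v⁆ := huv.symm
          subst ha'
          ext
          · rfl
          · exact hj
        rw [heq]
        exact hcom
      | one =>
        have : (j ⟨(1 : G₁), (commutator_eq_closure G₁) ▸ one_mem _⟩ : G₂) = 1 := by
          have : (⟨(1 : G₁), (commutator_eq_closure G₁) ▸ one_mem _⟩ : commutator G₁) = 1 :=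
            rfl
          rw [this, map_one]; rfl
        rw [this]
        exact one_mem _
      | mul a b ha hb iha ihb =>
        have : (⟨a * b, (commutator_eq_closure G₁) ▸ mul_mem ha hb⟩ : commutator G₁) =
            ⟨a, (commutator_eq_closure G₁) ▸ ha⟩ * ⟨b, (commutator_eq_closure G₁) ▸ hb⟩ :=
          rfl
        have h2 : ((a * b, (j ⟨a * b, (commutator_eq_closure G₁) ▸ mul_mem ha hb⟩ : G₂)) :
            G₁ × G₂) = (a, (j ⟨a, (commutator_eq_closure G₁) ▸ ha⟩ : G₂)) *
            (b, (j ⟨b, (commutator_eq_closure G₁) ▸ hb⟩ : G₂)) := by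
          rw [this, map_mul]
          rfl
        rw [h2]
        exact mul_mem iha ihb
      | inv a ha iha =>
        have : (⟨a⁻¹, (commutator_eq_closure G₁) ▸ inv_mem ha⟩ : commutator G₁) =
            (⟨a, (commutator_eq_closure G₁) ▸ ha⟩ : commutator G₁)⁻¹ := rfl
        have h2 : ((a⁻¹, (j ⟨a⁻¹, (commutator_eq_closure G₁) ▸ inv_mem ha⟩ : G₂)) :
            G₁ × G₂) = ((a, (j ⟨a, (commutator_eq_closure G₁) ▸ ha⟩ : G₂)) : G₁ × G₂)⁻¹ := by
          rw [this, map_inv]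
          rfl
        rw [h2]
        exact inv_mem iha
    have hc2 : (c : G₁) ∈ Subgroup.closure (commutatorSet G₁) :=
      (commutator_eq_closure G₁) ▸ c.2
    have := key (c : G₁) hc2
    convert this using 3
end

section
/- Let (i,j) be an isoclinism between groups G1 (with center Z1) and G2 (with center Z2), and let G12 = {(g1, g2) ∈ G1 × G2 : i(g1 Z1) = g2 Z2} be the fiber product. Then [G12, G12] ∩ (Z1 × {1}) = {(1,1)} and [G12, G12] ∩ ({1} × Z2) = {(1,1)}; consequently the homomorphisms Z1 → G12/[G12,G12], z ↦ (z,1)·[G12,G12], and Z2 → G12/[G12,G12], z ↦ (1,z)·[G12,G12], are injective. -/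
open scoped commutatorElement

/-- The graph of `j`, viewed as a subgroup of `G₁ × G₂`. -/
def graphJ {G₁ G₂ : Type*} [Group G₁] [Group G₂]
    (j : commutator G₁ ≃* commutator G₂) : Subgroup (G₁ × G₂) where
  carrier := {g | ∃ h : g.1 ∈ commutator G₁, ((j ⟨g.1, h⟩ : commutator G₂) : G₂) = g.2}
  one_mem' := ⟨one_mem _, by simp⟩
  mul_mem' := by
    rintro a b ⟨ha, ha2⟩ ⟨hb, hb2⟩
    refine ⟨mul_mem ha hb, ?_⟩
    simp only [Prod.fst_mul, Prod.snd_mul]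
    have : (⟨a.1 * b.1, mul_mem ha hb⟩ : commutator G₁) = ⟨a.1, ha⟩ * ⟨b.1, hb⟩ := rfl
    rw [this, map_mul]
    push_cast
    rw [ha2, hb2]
  inv_mem' := by
    rintro a ⟨ha, ha2⟩
    refine ⟨inv_mem ha, ?_⟩
    simp only [Prod.fst_inv, Prod.snd_inv]
    have : (⟨a.1⁻¹, inv_mem ha⟩ : commutator G₁) = (⟨a.1, ha⟩ : commutator G₁)⁻¹ := rfl
    rw [this, map_inv]
    push_cast
    rw [ha2]

/-- Let `(i,j)` be an isoclinism between groups `G₁` (with center `Z₁`)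
and `G₂` (with center `Z₂`), and let `G₁₂` be the fiber product.  Then
`[G₁₂,G₁₂] ∩ (Z₁ × {1}) = {(1,1)}` and `[G₁₂,G₁₂] ∩ ({1} × Z₂) = {(1,1)}`; consequently
the homomorphisms `Z₁ → G₁₂/[G₁₂,G₁₂]`, `z ↦ (z,1)·[G₁₂,G₁₂]`, and
`Z₂ → G₁₂/[G₁₂,G₁₂]`, `z ↦ (1,z)·[G₁₂,G₁₂]`, are injective. -/
theorem commutator_fiberProduct_meets_centers_trivially
    (G₁ G₂ : Type*) [Group G₁] [Group G₂]
    (i : (G₁ ⧸ Subgroup.center G₁) ≃* (G₂ ⧸ Subgroup.center G₂))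
    (j : commutator G₁ ≃* commutator G₂)
    (hij : ∀ (x y : G₁) (x' y' : G₂),
      (QuotientGroup.mk x' : G₂ ⧸ Subgroup.center G₂) = i (QuotientGroup.mk x) →
      (QuotientGroup.mk y' : G₂ ⧸ Subgroup.center G₂) = i (QuotientGroup.mk y) →
      (j ⟨⁅x, y⁆, Subgroup.commutator_mem_commutator (Subgroup.mem_top x)
          (Subgroup.mem_top y)⟩ : G₂) = ⁅x', y'⁆) :
    -- `[G₁₂,G₁₂] ∩ (Z₁ × {1}) = {(1,1)}`
    (∀ z ∈ Subgroup.center G₁,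
      ((z, 1) : G₁ × G₂) ∈ ⁅fiberProduct i, fiberProduct i⁆ → z = 1) ∧
    -- `[G₁₂,G₁₂] ∩ ({1} × Z₂) = {(1,1)}`
    (∀ z ∈ Subgroup.center G₂,
      ((1, z) : G₁ × G₂) ∈ ⁅fiberProduct i, fiberProduct i⁆ → z = 1) ∧
    -- `z ↦ (z,1)·[G₁₂,G₁₂]` is injective on `Z₁`
    (∀ z ∈ Subgroup.center G₁, ∀ w ∈ Subgroup.center G₁,
      ((z, 1) : G₁ × G₂) * ((w, 1) : G₁ × G₂)⁻¹ ∈ ⁅fiberProduct i, fiberProduct i⁆ →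
        z = w) ∧
    -- `z ↦ (1,z)·[G₁₂,G₁₂]` is injective on `Z₂`
    (∀ z ∈ Subgroup.center G₂, ∀ w ∈ Subgroup.center G₂,
      ((1, z) : G₁ × G₂) * ((1, w) : G₁ × G₂)⁻¹ ∈ ⁅fiberProduct i, fiberProduct i⁆ →
        z = w) := by
  have key : ⁅fiberProduct i, fiberProduct i⁆ ≤ graphJ j := by
    rw [Subgroup.commutator_le]
    rintro ⟨a1, a2⟩ ha ⟨b1, b2⟩ hb
    have ha' : (QuotientGroup.mk a2 : G₂ ⧸ Subgroup.center G₂) = i (QuotientGroup.mk a1) :=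
      ha.symm
    have hb' : (QuotientGroup.mk b2 : G₂ ⧸ Subgroup.center G₂) = i (QuotientGroup.mk b1) :=
      hb.symm
    have hc : (⁅(a1, a2), (b1, b2)⁆ : G₁ × G₂) = (⁅a1, b1⁆, ⁅a2, b2⁆) := rfl
    rw [hc]
    exact ⟨Subgroup.commutator_mem_commutator (Subgroup.mem_top a1) (Subgroup.mem_top b1),
      hij a1 b1 a2 b2 ha' hb'⟩
  have h1 : ∀ z ∈ Subgroup.center G₁,
      ((z, 1) : G₁ × G₂) ∈ ⁅fiberProduct i, fiberProduct i⁆ → z = 1 := by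
    intro z _ hz
    obtain ⟨hm, hj⟩ := key hz
    have : (⟨z, hm⟩ : commutator G₁) = 1 := by
      apply j.injective
      ext
      simpa using hj
    simpa using congrArg Subtype.val this
  have h2 : ∀ z ∈ Subgroup.center G₂,
      ((1, z) : G₁ × G₂) ∈ ⁅fiberProduct i, fiberProduct i⁆ → z = 1 := by
    intro z _ hz
    obtain ⟨hm, hj⟩ := key hz
    have h1' : (⟨(1 : G₁), hm⟩ : commutator G₁) = 1 := rfl
    rw [h1', map_one] at hj
    simpa using hj.symm
  refine ⟨h1, h2, ?_, ?_⟩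
  · intro z hz w hw h
    have : ((z * w⁻¹, 1) : G₁ × G₂) ∈ ⁅fiberProduct i, fiberProduct i⁆ := by
      simpa [Prod.ext_iff] using h
    have := h1 (z * w⁻¹) (mul_mem hz (inv_mem hw)) this
    exact mul_inv_eq_one.mp this
  · intro z hz w hw h
    have : ((1, z * w⁻¹) : G₁ × G₂) ∈ ⁅fiberProduct i, fiberProduct i⁆ := by
      simpa [Prod.ext_iff] using h
    have := h2 (z * w⁻¹) (mul_mem hz (inv_mem hw)) this
    exact mul_inv_eq_one.mp this
end

section
/- Let (i,j) be an isoclinism between groups G1 (with center Z1) and G2 (with center Z2). Let g1 ∈ G1 and g2 ∈ G2 be elements satisfying g2 Z2 = i(g1 Z1). Then the centralizers Z_{G1}(g1) and Z_{G2}(g2) are isoclinic. -/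
open scoped commutatorElement

open Subgroup QuotientGroup

namespace CentIso

variable {G₁ G₂ : Type*} [Group G₁] [Group G₂]

/-- The compatibility condition of an isoclinism. -/
def Compat (i : (G₁ ⧸ Subgroup.center G₁) ≃* (G₂ ⧸ Subgroup.center G₂))
    (j : commutator G₁ ≃* commutator G₂) : Prop :=
  ∀ (x y : G₁) (x' y' : G₂),
      (QuotientGroup.mk x' : G₂ ⧸ Subgroup.center G₂) = i (QuotientGroup.mk x) →
      (QuotientGroup.mk y' : G₂ ⧸ Subgroup.center G₂) = i (QuotientGroup.mk y) →
      (j ⟨⁅x, y⁆, Subgroup.commutator_mem_commutator (Subgroup.mem_top x)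
          (Subgroup.mem_top y)⟩ : G₂) = ⁅x', y'⁆

variable (i : (G₁ ⧸ Subgroup.center G₁) ≃* (G₂ ⧸ Subgroup.center G₂))
  (j : commutator G₁ ≃* commutator G₂)

lemma compat_symm (hij : Compat i j) : Compat i.symm j.symm := by
  intro x y x' y' hx hy
  have hx2 : (QuotientGroup.mk x : G₂ ⧸ Subgroup.center G₂) = i (QuotientGroup.mk x') := by
    rw [hx, MulEquiv.apply_symm_apply]
  have hy2 : (QuotientGroup.mk y : G₂ ⧸ Subgroup.center G₂) = i (QuotientGroup.mk y') := by
    rw [hy, MulEquiv.apply_symm_apply]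
  have h := hij x' y' x y hx2 hy2
  have h2 : j ⟨⁅x', y'⁆, Subgroup.commutator_mem_commutator (Subgroup.mem_top x')
      (Subgroup.mem_top y')⟩ = ⟨⁅x, y⁆, Subgroup.commutator_mem_commutator (Subgroup.mem_top x)
      (Subgroup.mem_top y)⟩ := Subtype.ext h
  have h3 := congrArg j.symm h2
  rw [MulEquiv.symm_apply_apply] at h3
  exact congrArg Subtype.val h3.symm

lemma comm_one_iff (hij : Compat i j) {x y : G₁} {x' y' : G₂}
    (hx : (QuotientGroup.mk x' : G₂ ⧸ Subgroup.center G₂) = i (QuotientGroup.mk x))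
    (hy : (QuotientGroup.mk y' : G₂ ⧸ Subgroup.center G₂) = i (QuotientGroup.mk y)) :
    ⁅x, y⁆ = 1 ↔ ⁅x', y'⁆ = 1 := by
  have h := hij x y x' y' hx hy
  constructor
  · intro h1
    rw [← h]
    have e : (⟨⁅x, y⁆, Subgroup.commutator_mem_commutator (Subgroup.mem_top x)
        (Subgroup.mem_top y)⟩ : commutator G₁) = 1 := Subtype.ext h1
    rw [e, map_one, OneMemClass.coe_one]
  · intro h1
    have h2 : j ⟨⁅x, y⁆, Subgroup.commutator_mem_commutator (Subgroup.mem_top x)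
        (Subgroup.mem_top y)⟩ = 1 := Subtype.ext (h.trans h1)
    have h3 := j.injective (h2.trans (map_one j).symm)
    exact congrArg Subtype.val h3

lemma exists_lift (x : G₁) : ∃ x' : G₂,
    (QuotientGroup.mk x' : G₂ ⧸ Subgroup.center G₂) = i (QuotientGroup.mk x) :=
  QuotientGroup.mk_surjective (i (QuotientGroup.mk x))

variable (g₁ : G₁) (g₂ : G₂)

lemma mem_cent_iff (hij : Compat i j)
    (hg : (QuotientGroup.mk g₂ : G₂ ⧸ Subgroup.center G₂) = i (QuotientGroup.mk g₁))
    {x : G₁} {x' : G₂}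
    (hx : (QuotientGroup.mk x' : G₂ ⧸ Subgroup.center G₂) = i (QuotientGroup.mk x)) :
    x ∈ Subgroup.centralizer {g₁} ↔ x' ∈ Subgroup.centralizer {g₂} := by
  rw [Subgroup.mem_centralizer_singleton_iff, Subgroup.mem_centralizer_singleton_iff,
    ← commutatorElement_eq_one_iff_mul_comm, ← commutatorElement_eq_one_iff_mul_comm]
  exact comm_one_iff i j hij hx hg

lemma center_imp (hij : Compat i j)
    (hg : (QuotientGroup.mk g₂ : G₂ ⧸ Subgroup.center G₂) = i (QuotientGroup.mk g₁))
    {x : G₁} {x' : G₂}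
    (hx : (QuotientGroup.mk x' : G₂ ⧸ Subgroup.center G₂) = i (QuotientGroup.mk x))
    (h1 : x ∈ Subgroup.centralizer {g₁}) (h2 : x' ∈ Subgroup.centralizer {g₂})
    (hc : (⟨x, h1⟩ : Subgroup.centralizer {g₁}) ∈ Subgroup.center ↥(Subgroup.centralizer {g₁})) :
    (⟨x', h2⟩ : Subgroup.centralizer {g₂}) ∈ Subgroup.center ↥(Subgroup.centralizer {g₂}) := by
  rw [Subgroup.mem_center_iff]
  intro b'
  obtain ⟨y, hy⟩ := exists_lift i.symm (b' : G₂)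
  have hy2 : (QuotientGroup.mk (b' : G₂) : G₂ ⧸ Subgroup.center G₂) = i (QuotientGroup.mk y) := by
    rw [hy, MulEquiv.apply_symm_apply]
  have hyC : y ∈ Subgroup.centralizer {g₁} :=
    (mem_cent_iff i j g₁ g₂ hij hg hy2).mpr b'.2
  have hcomm : ⁅x, y⁆ = 1 := by
    rw [commutatorElement_eq_one_iff_mul_comm]
    have h := Subgroup.mem_center_iff.mp hc ⟨y, hyC⟩
    exact (congrArg Subtype.val h).symm
  have h' : ⁅x', (b' : G₂)⁆ = 1 := (comm_one_iff i j hij hx hy2).mp hcomm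
  have h'' := commutatorElement_eq_one_iff_mul_comm.mp h'
  apply Subtype.ext
  simp only [Subgroup.coe_mul]
  exact h''.symm

end CentIso
-- appended to aux namespace content for testing
namespace CentIso

lemma comm_center_gen {G : Type*} [Group G] (a b z w : G)
    (hz : ∀ g, g * z = z * g) (hw : ∀ g, g * w = w * g) :
    ⁅a * z, b * w⁆ = ⁅a, b⁆ := by
  have h1 : z * (b * w) * z⁻¹ = b * w := by rw [← hz (b * w), mul_inv_cancel_right]
  have h2 : w * a⁻¹ * w⁻¹ = a⁻¹ := by rw [← hw a⁻¹, mul_inv_cancel_right]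
  calc ⁅a * z, b * w⁆ = a * (z * (b * w) * z⁻¹) * a⁻¹ * (w⁻¹ * b⁻¹) := by
        rw [commutatorElement_def]; group
    _ = a * (b * w) * a⁻¹ * (w⁻¹ * b⁻¹) := by rw [h1]
    _ = a * b * (w * a⁻¹ * w⁻¹) * b⁻¹ := by group
    _ = a * b * a⁻¹ * b⁻¹ := by rw [h2]
    _ = ⁅a, b⁆ := (commutatorElement_def a b).symm

variable {G₁ G₂ : Type*} [Group G₁] [Group G₂]
  (i : (G₁ ⧸ Subgroup.center G₁) ≃* (G₂ ⧸ Subgroup.center G₂))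
  (j : commutator G₁ ≃* commutator G₂) (g₁ : G₁) (g₂ : G₂)

lemma j_maps (hij : Compat i j)
    (hg : (QuotientGroup.mk g₂ : G₂ ⧸ Subgroup.center G₂) = i (QuotientGroup.mk g₁))
    {a : G₁}
    (ha : a ∈ (⁅Subgroup.centralizer {g₁}, Subgroup.centralizer {g₁}⁆ : Subgroup G₁)) :
    ∀ hk : a ∈ commutator G₁,
      ((j ⟨a, hk⟩ : commutator G₂) : G₂) ∈
        (⁅Subgroup.centralizer {g₂}, Subgroup.centralizer {g₂}⁆ : Subgroup G₂) := by
  have DleK : (⁅Subgroup.centralizer {g₁}, Subgroup.centralizer {g₁}⁆ : Subgroup G₁)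
      ≤ commutator G₁ := Subgroup.commutator_mono le_top le_top
  rw [Subgroup.commutator_def] at ha
  induction ha using Subgroup.closure_induction with
  | mem g hgmem =>
    obtain ⟨p, hp, q, hq, rfl⟩ := hgmem
    intro hk
    obtain ⟨p', hp'⟩ := exists_lift i p
    obtain ⟨q', hq'⟩ := exists_lift i q
    have h : ((j ⟨⁅p, q⁆, hk⟩ : commutator G₂) : G₂) = ⁅p', q'⁆ := hij p q p' q' hp' hq'
    rw [h]
    exact Subgroup.commutator_mem_commutator
      ((mem_cent_iff i j g₁ g₂ hij hg hp').mp hp)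
      ((mem_cent_iff i j g₁ g₂ hij hg hq').mp hq)
  | one =>
    intro hk
    have e : (⟨(1 : G₁), hk⟩ : commutator G₁) = 1 := rfl
    rw [e, map_one, OneMemClass.coe_one]
    exact one_mem _
  | mul p q hp hq ihp ihq =>
    intro hk
    have e : (⟨p * q, hk⟩ : commutator G₁) = ⟨p, DleK hp⟩ * ⟨q, DleK hq⟩ := rfl
    rw [e, map_mul, Subgroup.coe_mul]
    exact mul_mem (ihp _) (ihq _)
  | inv p hp ihp =>
    intro hk
    have e : (⟨p⁻¹, hk⟩ : commutator G₁) = (⟨p, DleK hp⟩)⁻¹ := rfl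
    rw [e, map_inv, InvMemClass.coe_inv]
    exact inv_mem (ihp _)

lemma mem_commutator_coe {G : Type*} [Group G] (H : Subgroup G) (x : ↥H) :
    x ∈ commutator ↥H ↔ (x : G) ∈ (⁅H, H⁆ : Subgroup G) := by
  have e : (⁅H, H⁆ : Subgroup G) = Subgroup.map H.subtype (commutator ↥H) := by
    rw [commutator_def, Subgroup.map_commutator, ← MonoidHom.range_eq_map,
      Subgroup.range_subtype]
  rw [e]
  constructor
  · intro h; exact ⟨x, h, rfl⟩
  · rintro ⟨y, hy, hxy⟩
    have : y = x := Subtype.ext hxy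
    rwa [this] at hy

end CentIso
namespace CentIso

lemma commutator_self_le {G : Type*} [Group G] (H : Subgroup G) :
    (⁅H, H⁆ : Subgroup G) ≤ H :=
  Subgroup.commutator_le.mpr fun p hp q hq => by
    rw [commutatorElement_def]
    exact mul_mem (mul_mem (mul_mem hp hq) (inv_mem hp)) (inv_mem hq)

lemma memK {G : Type*} [Group G] (H : Subgroup G) (c : commutator ↥H) :
    ((c : ↥H) : G) ∈ commutator G :=
  Subgroup.commutator_mono le_top le_top ((mem_commutator_coe H (c : ↥H)).mp c.2)

variable {G₁ G₂ : Type*} [Group G₁] [Group G₂]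
  (i : (G₁ ⧸ Subgroup.center G₁) ≃* (G₂ ⧸ Subgroup.center G₂))
  (j : commutator G₁ ≃* commutator G₂) (g₁ : G₁) (g₂ : G₂)

def psiFun (hij : Compat i j)
    (hg : (QuotientGroup.mk g₂ : G₂ ⧸ Subgroup.center G₂) = i (QuotientGroup.mk g₁))
    (c : commutator ↥(Subgroup.centralizer {g₁})) : commutator ↥(Subgroup.centralizer {g₂}) :=
  ⟨⟨((j ⟨((c : ↥(Subgroup.centralizer {g₁})) : G₁), memK _ c⟩ : commutator G₂) : G₂),
      commutator_self_le _
        (j_maps i j g₁ g₂ hij hg ((mem_commutator_coe _ _).mp c.2) (memK _ c))⟩,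
    (mem_commutator_coe _ _).mpr
      (j_maps i j g₁ g₂ hij hg ((mem_commutator_coe _ _).mp c.2) (memK _ c))⟩

lemma psiFun_val (hij : Compat i j)
    (hg : (QuotientGroup.mk g₂ : G₂ ⧸ Subgroup.center G₂) = i (QuotientGroup.mk g₁))
    (c : commutator ↥(Subgroup.centralizer {g₁}))
    (hk : ((c : ↥(Subgroup.centralizer {g₁})) : G₁) ∈ commutator G₁) :
    (((psiFun i j g₁ g₂ hij hg c : ↥(Subgroup.centralizer {g₂}))) : G₂)
      = ((j ⟨((c : ↥(Subgroup.centralizer {g₁})) : G₁), hk⟩ : commutator G₂) : G₂) := rfl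

lemma psiFun_mul (hij : Compat i j)
    (hg : (QuotientGroup.mk g₂ : G₂ ⧸ Subgroup.center G₂) = i (QuotientGroup.mk g₁))
    (a b : commutator ↥(Subgroup.centralizer {g₁})) :
    psiFun i j g₁ g₂ hij hg (a * b) = psiFun i j g₁ g₂ hij hg a * psiFun i j g₁ g₂ hij hg b := by
  apply Subtype.ext
  apply Subtype.ext
  have e : (⟨(((a * b : commutator ↥(Subgroup.centralizer {g₁})) : ↥(Subgroup.centralizer {g₁})) : G₁),
      memK _ (a * b)⟩ : commutator G₁) = ⟨_, memK _ a⟩ * ⟨_, memK _ b⟩ := rfl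
  show (((psiFun i j g₁ g₂ hij hg (a * b) : ↥(Subgroup.centralizer {g₂}))) : G₂) = _
  rw [psiFun_val i j g₁ g₂ hij hg (a * b) (memK _ (a * b)), e, map_mul]
  rfl

end CentIso
namespace CentIso

lemma center_of_val {G : Type*} [Group G] (H : Subgroup G) (x : ↥H)
    (h : (x : G) ∈ Subgroup.center G) : x ∈ Subgroup.center ↥H := by
  rw [Subgroup.mem_center_iff]
  intro g
  apply Subtype.ext
  simp only [Subgroup.coe_mul]
  exact Subgroup.mem_center_iff.mp h (g : G)

variable {G₁ G₂ : Type*} [Group G₁] [Group G₂]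
  (i : (G₁ ⧸ Subgroup.center G₁) ≃* (G₂ ⧸ Subgroup.center G₂))
  (j : commutator G₁ ≃* commutator G₂) (g₁ : G₁) (g₂ : G₂)

lemma exists_psi (hij : Compat i j)
    (hg : (QuotientGroup.mk g₂ : G₂ ⧸ Subgroup.center G₂) = i (QuotientGroup.mk g₁)) :
    ∃ ψ : commutator ↥(Subgroup.centralizer {g₁}) ≃* commutator ↥(Subgroup.centralizer {g₂}),
      ∀ (c : commutator ↥(Subgroup.centralizer {g₁}))
        (hk : ((c : ↥(Subgroup.centralizer {g₁})) : G₁) ∈ commutator G₁),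
        (((ψ c : ↥(Subgroup.centralizer {g₂}))) : G₂)
          = ((j ⟨((c : ↥(Subgroup.centralizer {g₁})) : G₁), hk⟩ : commutator G₂) : G₂) := by
  have hij' := compat_symm i j hij
  have hg' : (QuotientGroup.mk g₁ : G₁ ⧸ Subgroup.center G₁) = i.symm (QuotientGroup.mk g₂) := by
    rw [hg, MulEquiv.symm_apply_apply]
  refine ⟨{ toFun := psiFun i j g₁ g₂ hij hg,
            invFun := psiFun i.symm j.symm g₂ g₁ hij' hg',
            left_inv := ?_, right_inv := ?_,
            map_mul' := psiFun_mul i j g₁ g₂ hij hg }, ?_⟩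
  · intro c
    apply Subtype.ext
    apply Subtype.ext
    rw [psiFun_val i.symm j.symm g₂ g₁ hij' hg' _ (memK _ _)]
    have e : (⟨(((psiFun i j g₁ g₂ hij hg c : commutator ↥(Subgroup.centralizer {g₂}))
          : ↥(Subgroup.centralizer {g₂})) : G₂), memK _ _⟩ : commutator G₂)
        = j ⟨_, memK _ c⟩ :=
      Subtype.ext (psiFun_val i j g₁ g₂ hij hg c (memK _ c))
    rw [e, MulEquiv.symm_apply_apply]
  · intro c
    apply Subtype.ext
    apply Subtype.ext
    rw [psiFun_val i j g₁ g₂ hij hg _ (memK _ _)]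
    have e : (⟨(((psiFun i.symm j.symm g₂ g₁ hij' hg' c : commutator ↥(Subgroup.centralizer {g₁}))
          : ↥(Subgroup.centralizer {g₁})) : G₁), memK _ _⟩ : commutator G₁)
        = j.symm ⟨_, memK _ c⟩ :=
      Subtype.ext (psiFun_val i.symm j.symm g₂ g₁ hij' hg' c (memK _ c))
    rw [e, MulEquiv.apply_symm_apply]
  · intro c hk
    exact psiFun_val i j g₁ g₂ hij hg c hk

noncomputable def Fmap (hij : Compat i j)
    (hg : (QuotientGroup.mk g₂ : G₂ ⧸ Subgroup.center G₂) = i (QuotientGroup.mk g₁))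
    (x : ↥(Subgroup.centralizer {g₁})) :
    ↥(Subgroup.centralizer {g₂}) ⧸ Subgroup.center ↥(Subgroup.centralizer {g₂}) :=
  QuotientGroup.mk ⟨(exists_lift i (x : G₁)).choose,
    (mem_cent_iff i j g₁ g₂ hij hg (exists_lift i (x : G₁)).choose_spec).mp x.2⟩

lemma Fmap_eq (hij : Compat i j)
    (hg : (QuotientGroup.mk g₂ : G₂ ⧸ Subgroup.center G₂) = i (QuotientGroup.mk g₁))
    (x : ↥(Subgroup.centralizer {g₁})) (x' : G₂)
    (hx' : (QuotientGroup.mk x' : G₂ ⧸ Subgroup.center G₂) = i (QuotientGroup.mk (x : G₁)))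
    (h2 : x' ∈ Subgroup.centralizer {g₂}) :
    Fmap i j g₁ g₂ hij hg x = QuotientGroup.mk ⟨x', h2⟩ := by
  apply QuotientGroup.eq.mpr
  apply center_of_val
  have hz : ((exists_lift i (x : G₁)).choose)⁻¹ * x' ∈ Subgroup.center G₂ :=
    QuotientGroup.eq.mp ((exists_lift i (x : G₁)).choose_spec.trans hx'.symm)
  simpa only [Subgroup.coe_mul, InvMemClass.coe_inv] using hz

end CentIso
namespace CentIso

variable {G₁ G₂ : Type*} [Group G₁] [Group G₂]
  (i : (G₁ ⧸ Subgroup.center G₁) ≃* (G₂ ⧸ Subgroup.center G₂))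
  (j : commutator G₁ ≃* commutator G₂) (g₁ : G₁) (g₂ : G₂)

noncomputable def Fhom (hij : Compat i j)
    (hg : (QuotientGroup.mk g₂ : G₂ ⧸ Subgroup.center G₂) = i (QuotientGroup.mk g₁)) :
    ↥(Subgroup.centralizer {g₁}) →*
      ↥(Subgroup.centralizer {g₂}) ⧸ Subgroup.center ↥(Subgroup.centralizer {g₂}) where
  toFun := Fmap i j g₁ g₂ hij hg
  map_one' := by
    have h1 : (QuotientGroup.mk (1 : G₂) : G₂ ⧸ Subgroup.center G₂)
        = i (QuotientGroup.mk (((1 : ↥(Subgroup.centralizer {g₁})) : G₁))) := by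
      simp
    rw [Fmap_eq i j g₁ g₂ hij hg 1 1 h1 (one_mem _)]
    rfl
  map_mul' a b := by
    have ha := (exists_lift i ((a : ↥(Subgroup.centralizer {g₁})) : G₁)).choose_spec
    have hb := (exists_lift i ((b : ↥(Subgroup.centralizer {g₁})) : G₁)).choose_spec
    have hmemA : (exists_lift i ((a : ↥(Subgroup.centralizer {g₁})) : G₁)).choose
        ∈ Subgroup.centralizer {g₂} := (mem_cent_iff i j g₁ g₂ hij hg ha).mp a.2
    have hmemB : (exists_lift i ((b : ↥(Subgroup.centralizer {g₁})) : G₁)).choose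
        ∈ Subgroup.centralizer {g₂} := (mem_cent_iff i j g₁ g₂ hij hg hb).mp b.2
    have hab : (QuotientGroup.mk ((exists_lift i ((a : ↥(Subgroup.centralizer {g₁})) : G₁)).choose
          * (exists_lift i ((b : ↥(Subgroup.centralizer {g₁})) : G₁)).choose)
          : G₂ ⧸ Subgroup.center G₂)
        = i (QuotientGroup.mk (((a * b : ↥(Subgroup.centralizer {g₁})) : G₁))) := by
      rw [Subgroup.coe_mul, QuotientGroup.mk_mul, QuotientGroup.mk_mul, map_mul, ha, hb]
    show Fmap i j g₁ g₂ hij hg (a * b)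
      = Fmap i j g₁ g₂ hij hg a * Fmap i j g₁ g₂ hij hg b
    rw [Fmap_eq i j g₁ g₂ hij hg (a * b) _ hab (mul_mem hmemA hmemB)]
    rfl

lemma exists_phi (hij : Compat i j)
    (hg : (QuotientGroup.mk g₂ : G₂ ⧸ Subgroup.center G₂) = i (QuotientGroup.mk g₁)) :
    ∃ φ : (↥(Subgroup.centralizer {g₁}) ⧸ Subgroup.center ↥(Subgroup.centralizer {g₁}))
        ≃* (↥(Subgroup.centralizer {g₂}) ⧸ Subgroup.center ↥(Subgroup.centralizer {g₂})),
      ∀ (x : ↥(Subgroup.centralizer {g₁})) (x' : G₂)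
        (hx' : (QuotientGroup.mk x' : G₂ ⧸ Subgroup.center G₂) = i (QuotientGroup.mk (x : G₁)))
        (h2 : x' ∈ Subgroup.centralizer {g₂}),
        φ (QuotientGroup.mk x) = QuotientGroup.mk (⟨x', h2⟩ : ↥(Subgroup.centralizer {g₂})) := by
  have hij' := compat_symm i j hij
  have hg' : (QuotientGroup.mk g₁ : G₁ ⧸ Subgroup.center G₁) = i.symm (QuotientGroup.mk g₂) := by
    rw [hg, MulEquiv.symm_apply_apply]
  have hker : ∀ x ∈ Subgroup.center ↥(Subgroup.centralizer {g₁}),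
      Fhom i j g₁ g₂ hij hg x = 1 := by
    intro x hx
    have hs := (exists_lift i ((x : ↥(Subgroup.centralizer {g₁})) : G₁)).choose_spec
    have hmem : (exists_lift i ((x : ↥(Subgroup.centralizer {g₁})) : G₁)).choose
        ∈ Subgroup.centralizer {g₂} := (mem_cent_iff i j g₁ g₂ hij hg hs).mp x.2
    have e : Fhom i j g₁ g₂ hij hg x = QuotientGroup.mk ⟨_, hmem⟩ :=
      Fmap_eq i j g₁ g₂ hij hg x _ hs hmem
    rw [e, QuotientGroup.eq_one_iff]
    exact center_imp i j g₁ g₂ hij hg hs x.2 hmem hx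
  have hker' : ∀ x ∈ Subgroup.center ↥(Subgroup.centralizer {g₂}),
      Fhom i.symm j.symm g₂ g₁ hij' hg' x = 1 := by
    intro x hx
    have hs := (exists_lift i.symm ((x : ↥(Subgroup.centralizer {g₂})) : G₂)).choose_spec
    have hmem : (exists_lift i.symm ((x : ↥(Subgroup.centralizer {g₂})) : G₂)).choose
        ∈ Subgroup.centralizer {g₁} := (mem_cent_iff i.symm j.symm g₂ g₁ hij' hg' hs).mp x.2
    have e : Fhom i.symm j.symm g₂ g₁ hij' hg' x = QuotientGroup.mk ⟨_, hmem⟩ :=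
      Fmap_eq i.symm j.symm g₂ g₁ hij' hg' x _ hs hmem
    rw [e, QuotientGroup.eq_one_iff]
    exact center_imp i.symm j.symm g₂ g₁ hij' hg' hs x.2 hmem hx
  set φ₀ := QuotientGroup.lift _ (Fhom i j g₁ g₂ hij hg)
    (fun x hx => (MonoidHom.mem_ker).mpr (hker x hx)) with hφ₀
  set φ₁ := QuotientGroup.lift _ (Fhom i.symm j.symm g₂ g₁ hij' hg')
    (fun x hx => (MonoidHom.mem_ker).mpr (hker' x hx)) with hφ₁
  have key : ∀ (x : ↥(Subgroup.centralizer {g₁})) (x' : G₂)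
      (hx' : (QuotientGroup.mk x' : G₂ ⧸ Subgroup.center G₂) = i (QuotientGroup.mk (x : G₁)))
      (h2 : x' ∈ Subgroup.centralizer {g₂}),
      φ₀ (QuotientGroup.mk x) = QuotientGroup.mk (⟨x', h2⟩ : ↥(Subgroup.centralizer {g₂})) := by
    intro x x' hx' h2
    rw [hφ₀, QuotientGroup.lift_mk']
    exact Fmap_eq i j g₁ g₂ hij hg x x' hx' h2
  have key' : ∀ (x : ↥(Subgroup.centralizer {g₂})) (x' : G₁)
      (hx' : (QuotientGroup.mk x' : G₁ ⧸ Subgroup.center G₁)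
        = i.symm (QuotientGroup.mk (x : G₂)))
      (h2 : x' ∈ Subgroup.centralizer {g₁}),
      φ₁ (QuotientGroup.mk x) = QuotientGroup.mk (⟨x', h2⟩ : ↥(Subgroup.centralizer {g₁})) := by
    intro x x' hx' h2
    rw [hφ₁, QuotientGroup.lift_mk']
    exact Fmap_eq i.symm j.symm g₂ g₁ hij' hg' x x' hx' h2
  have hcomp₁ : φ₁.comp φ₀ = MonoidHom.id _ := by
    apply MonoidHom.ext
    intro q
    refine QuotientGroup.induction_on q fun x => ?_
    have hs := (exists_lift i ((x : ↥(Subgroup.centralizer {g₁})) : G₁)).choose_spec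
    have hmem : (exists_lift i ((x : ↥(Subgroup.centralizer {g₁})) : G₁)).choose
        ∈ Subgroup.centralizer {g₂} := (mem_cent_iff i j g₁ g₂ hij hg hs).mp x.2
    have e1 := key x _ hs hmem
    have hback : (QuotientGroup.mk ((x : ↥(Subgroup.centralizer {g₁})) : G₁)
          : G₁ ⧸ Subgroup.center G₁)
        = i.symm (QuotientGroup.mk ((⟨_, hmem⟩ : ↥(Subgroup.centralizer {g₂})) : G₂)) := by
      rw [show ((⟨_, hmem⟩ : ↥(Subgroup.centralizer {g₂})) : G₂)
          = (exists_lift i ((x : ↥(Subgroup.centralizer {g₁})) : G₁)).choose from rfl,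
        hs, MulEquiv.symm_apply_apply]
    have e2 := key' ⟨_, hmem⟩ _ hback x.2
    simp only [MonoidHom.comp_apply, MonoidHom.id_apply]
    rw [e1, e2]
  have hcomp₂ : φ₀.comp φ₁ = MonoidHom.id _ := by
    apply MonoidHom.ext
    intro q
    refine QuotientGroup.induction_on q fun x => ?_
    have hs := (exists_lift i.symm ((x : ↥(Subgroup.centralizer {g₂})) : G₂)).choose_spec
    have hmem : (exists_lift i.symm ((x : ↥(Subgroup.centralizer {g₂})) : G₂)).choose
        ∈ Subgroup.centralizer {g₁} := (mem_cent_iff i.symm j.symm g₂ g₁ hij' hg' hs).mp x.2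
    have e1 := key' x _ hs hmem
    have hback : (QuotientGroup.mk ((x : ↥(Subgroup.centralizer {g₂})) : G₂)
          : G₂ ⧸ Subgroup.center G₂)
        = i (QuotientGroup.mk ((⟨_, hmem⟩ : ↥(Subgroup.centralizer {g₁})) : G₁)) := by
      rw [show ((⟨_, hmem⟩ : ↥(Subgroup.centralizer {g₁})) : G₁)
          = (exists_lift i.symm ((x : ↥(Subgroup.centralizer {g₂})) : G₂)).choose from rfl,
        hs, MulEquiv.apply_symm_apply]
    have e2 := key ⟨_, hmem⟩ _ hback x.2
    simp only [MonoidHom.comp_apply, MonoidHom.id_apply]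
    rw [e1, e2]
  refine ⟨MonoidHom.toMulEquiv φ₀ φ₁ hcomp₁ hcomp₂, ?_⟩
  intro x x' hx' h2
  have : (MonoidHom.toMulEquiv φ₀ φ₁ hcomp₁ hcomp₂) (QuotientGroup.mk x)
      = φ₀ (QuotientGroup.mk x) := rfl
  rw [this]
  exact key x x' hx' h2

end CentIso

/-- Let `(i,j)` be an isoclinism between groups `G₁` (with center `Z₁`)
and `G₂` (with center `Z₂`), and let `g₁ ∈ G₁` and `g₂ ∈ G₂` be elements satisfying
`g₂Z₂ = i(g₁Z₁)`.  Then the centralizers `Z_{G₁}(g₁)` and `Z_{G₂}(g₂)` are isoclinic. -/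
theorem centralizers_isoclinic
    (G₁ G₂ : Type*) [Group G₁] [Group G₂]
    (i : (G₁ ⧸ Subgroup.center G₁) ≃* (G₂ ⧸ Subgroup.center G₂))
    (j : commutator G₁ ≃* commutator G₂)
    (hij : ∀ (x y : G₁) (x' y' : G₂),
      (QuotientGroup.mk x' : G₂ ⧸ Subgroup.center G₂) = i (QuotientGroup.mk x) →
      (QuotientGroup.mk y' : G₂ ⧸ Subgroup.center G₂) = i (QuotientGroup.mk y) →
      (j ⟨⁅x, y⁆, Subgroup.commutator_mem_commutator (Subgroup.mem_top x)
          (Subgroup.mem_top y)⟩ : G₂) = ⁅x', y'⁆)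
    (g₁ : G₁) (g₂ : G₂)
    (hg : (QuotientGroup.mk g₂ : G₂ ⧸ Subgroup.center G₂) = i (QuotientGroup.mk g₁)) :
    IsIsoclinic ↥(Subgroup.centralizer {g₁}) ↥(Subgroup.centralizer {g₂}) := by
  have hij : CentIso.Compat i j := hij
  obtain ⟨φ, hφ⟩ := CentIso.exists_phi i j g₁ g₂ hij hg
  obtain ⟨ψ, hψ⟩ := CentIso.exists_psi i j g₁ g₂ hij hg
  refine ⟨φ, ψ, ?_⟩
  intro x y x' y' hx hy
  -- lifts for x and y
  obtain ⟨A, hA⟩ := CentIso.exists_lift i ((x : ↥(Subgroup.centralizer {g₁})) : G₁)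
  obtain ⟨B, hB⟩ := CentIso.exists_lift i ((y : ↥(Subgroup.centralizer {g₁})) : G₁)
  have hmemA : A ∈ Subgroup.centralizer {g₂} :=
    (CentIso.mem_cent_iff i j g₁ g₂ hij hg hA).mp x.2
  have hmemB : B ∈ Subgroup.centralizer {g₂} :=
    (CentIso.mem_cent_iff i j g₁ g₂ hij hg hB).mp y.2
  rw [hφ x A hA hmemA] at hx
  rw [hφ y B hB hmemB] at hy
  -- central corrections
  have hzc : (⟨A, hmemA⟩ : ↥(Subgroup.centralizer {g₂}))⁻¹ * x'
      ∈ Subgroup.center ↥(Subgroup.centralizer {g₂}) := QuotientGroup.eq.mp hx.symm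
  have hwc : (⟨B, hmemB⟩ : ↥(Subgroup.centralizer {g₂}))⁻¹ * y'
      ∈ Subgroup.center ↥(Subgroup.centralizer {g₂}) := QuotientGroup.eq.mp hy.symm
  have hx'eq : x' = (⟨A, hmemA⟩ : ↥(Subgroup.centralizer {g₂}))
      * ((⟨A, hmemA⟩ : ↥(Subgroup.centralizer {g₂}))⁻¹ * x') := by
    rw [mul_inv_cancel_left]
  have hy'eq : y' = (⟨B, hmemB⟩ : ↥(Subgroup.centralizer {g₂}))
      * ((⟨B, hmemB⟩ : ↥(Subgroup.centralizer {g₂}))⁻¹ * y') := by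
    rw [mul_inv_cancel_left]
  rw [hx'eq, hy'eq, CentIso.comm_center_gen _ _ _ _
    (fun g => Subgroup.mem_center_iff.mp hzc g)
    (fun g => Subgroup.mem_center_iff.mp hwc g)]
  -- now compute the left-hand side via ψ and j
  apply Subtype.ext
  rw [hψ ⟨⁅x, y⁆, Subgroup.commutator_mem_commutator (Subgroup.mem_top x)
      (Subgroup.mem_top y)⟩
    (Subgroup.commutator_mem_commutator (Subgroup.mem_top
      ((x : ↥(Subgroup.centralizer {g₁})) : G₁)) (Subgroup.mem_top
      ((y : ↥(Subgroup.centralizer {g₁})) : G₁)))]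
  exact hij ((x : ↥(Subgroup.centralizer {g₁})) : G₁)
    ((y : ↥(Subgroup.centralizer {g₁})) : G₁) A B hA hB
end
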